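/- Let S be a positive face structure of dimension n ≥ k. Then both the k-th domain d^{(k)}S and the k-th codomain c^{(k)}S are positive face structures of dimension k, where d^{(k)}S has faces (d^{(k)}S)_k = S_k − γ(S_{k+1}), (d^{(k)}S)_l = S_l for l < k, empty above k; and c^{(k)}S has faces (c^{(k)}S)_k = S_k − δ(S_{k+1}), (c^{(k)}S)_{k−1} = S_{k−1} − ι(S_{k+1}), (c^{(k)}S)_l = S_l for l < k−1, empty above k. -/

import Mathlib

/-- A pre-hypergraph: dimension-indexed finite sets of faces together with
codomain functions `gam k : S_{k+1} → S_k` and domain assignments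
`del k : S_{k+1} → Finset S_k`. -/
structure PreHG where
  faces : ℕ → Finset ℕ
  gam : ℕ → ℕ → ℕ
  del : ℕ → ℕ → Finset ℕ

namespace PreHG

/-- δ extended to sets of faces. -/
def delS (S : PreHG) (k : ℕ) (A : Finset ℕ) : Finset ℕ := A.biUnion (S.del k)

/-- γ extended to sets of faces. -/
def gamS (S : PreHG) (k : ℕ) (A : Finset ℕ) : Finset ℕ := A.image (S.gam k)

/-- The set `ι(a) = δδ(a) ∩ γδ(a)` of internal faces of a face `a` of dimension `k+2`
(the result lives in dimension `k`). -/
def iota (S : PreHG) (k : ℕ) (a : ℕ) : Finset ℕ :=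
  S.delS k (S.del (k+1) a) ∩ S.gamS k (S.del (k+1) a)

/-- One step of the upper order: `a ⊲⁺ b` on faces of dimension `k`:
there is `α` of dimension `k+1` with `a ∈ δ(α)` and `γ(α) = b`. -/
def ltPlusOne (S : PreHG) (k : ℕ) (a b : ℕ) : Prop :=
  ∃ α ∈ S.faces (k+1), a ∈ S.del k α ∧ S.gam k α = b

/-- The upper order `<⁺` on faces of dimension `k` (transitive closure of `⊲⁺`). -/
def ltPlus (S : PreHG) (k : ℕ) : ℕ → ℕ → Prop :=
  Relation.TransGen (S.ltPlusOne k)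

/-- One step of the lower order: `a ⊲⁻ b` iff `γ(a) ∈ δ(b)`, on faces of dimension `k`
(the empty relation in dimension 0). -/
def ltMinusOne (S : PreHG) : ℕ → ℕ → ℕ → Prop
  | 0, _, _ => False
  | (k+1), a, b => a ∈ S.faces (k+1) ∧ b ∈ S.faces (k+1) ∧ S.gam k a ∈ S.del k b

/-- The lower order `<⁻` on faces of dimension `k` (transitive closure of `⊲⁻`). -/
def ltMinus (S : PreHG) (k : ℕ) : ℕ → ℕ → Prop :=
  Relation.TransGen (S.ltMinusOne k)

/-- Comparability in the upper order. -/
def perpPlus (S : PreHG) (k : ℕ) (a b : ℕ) : Prop := S.ltPlus k a b ∨ S.ltPlus k b a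

/-- Comparability in the lower order. -/
def perpMinus (S : PreHG) (k : ℕ) (a b : ℕ) : Prop := S.ltMinus k a b ∨ S.ltMinus k b a

/-- Iterated codomain `γ^{(l)}`: maps a face of dimension `l+m` down to dimension `l`. -/
def gDown (S : PreHG) (l : ℕ) : ℕ → ℕ → ℕ
  | 0, a => a
  | (m+1), a => gDown S l m (S.gam (l+m) a)

/-- The axioms of a positive hypergraph. -/
def IsHG (S : PreHG) : Prop :=
  (∀ k a, a ∈ S.faces (k+1) → S.gam k a ∈ S.faces k) ∧
  (∀ k a, a ∈ S.faces (k+1) → S.del k a ⊆ S.faces k) ∧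
  (∀ k a, a ∈ S.faces (k+1) → (S.del k a).Nonempty) ∧
  (∀ a ∈ S.faces 1, (S.del 0 a).card = 1) ∧
  (∃ N, ∀ k, N ≤ k → S.faces k = ∅)

/-- Globularity: for faces of dimension ≥ 2,
`{γγ(a)} = γδ(a) − δδ(a)` and `δγ(a) = δδ(a) − γδ(a)`. -/
def Globular (S : PreHG) : Prop :=
  ∀ k a, a ∈ S.faces (k+2) →
    ({S.gam k (S.gam (k+1) a)} : Finset ℕ)
        = S.gamS k (S.del (k+1) a) \ S.delS k (S.del (k+1) a) ∧
      S.del k (S.gam (k+1) a)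
        = S.delS k (S.del (k+1) a) \ S.gamS k (S.del (k+1) a)

/-- Strictness: `<⁺` is irreflexive in every dimension. -/
def StrictPlus (S : PreHG) : Prop := ∀ k, ∀ a ∈ S.faces k, ¬ S.ltPlus k a a

/-- `<⁺` is linear in dimension 0. -/
def LinearZero (S : PreHG) : Prop :=
  ∀ a ∈ S.faces 0, ∀ b ∈ S.faces 0, a = b ∨ S.ltPlus 0 a b ∨ S.ltPlus 0 b a

/-- Disjointness: no two faces of positive dimension are comparable in both orders. -/
def Disjointness (S : PreHG) : Prop :=
  ∀ k a b, a ∈ S.faces (k+1) → b ∈ S.faces (k+1) →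
    ¬ (S.perpPlus (k+1) a b ∧ S.perpMinus (k+1) a b)

/-- Pencil linearity: γ-fibers and δ-fibers are linearly ordered by `<⁺`. -/
def Pencil (S : PreHG) : Prop :=
  ∀ k x,
    (∀ a b, a ∈ S.faces (k+1) → b ∈ S.faces (k+1) →
      S.gam k a = x → S.gam k b = x → a = b ∨ S.perpPlus (k+1) a b) ∧
    (∀ a b, a ∈ S.faces (k+1) → b ∈ S.faces (k+1) →
      x ∈ S.del k a → x ∈ S.del k b → a = b ∨ S.perpPlus (k+1) a b)

/-- A positive face structure: a nonempty positive hypergraph satisfying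
globularity, strictness, disjointness and pencil linearity. -/
def IsPFS (S : PreHG) : Prop :=
  S.IsHG ∧ (S.faces 0).Nonempty ∧ S.Globular ∧ S.StrictPlus ∧ S.LinearZero ∧
    S.Disjointness ∧ S.Pencil

end PreHG

/-- The `k`-th domain `d^{(k)}S`. -/
def PreHG.dTrunc (S : PreHG) (k : ℕ) : PreHG where
  faces := fun l =>
    if l < k then S.faces l
    else if l = k then S.faces k \ S.gamS k (S.faces (k+1))
    else ∅
  gam := S.gam
  del := S.del

/-- The `k`-th codomain `c^{(k)}S`. -/
def PreHG.cTrunc (S : PreHG) (k : ℕ) : PreHG where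
  faces := fun l =>
    if l + 1 < k then S.faces l
    else if l + 1 = k then S.faces l \ (S.faces (k+1)).biUnion (S.iota l)
    else if l = k then S.faces k \ S.delS k (S.faces (k+1))
    else ∅
  gam := S.gam
  del := S.del

/-- `S` has dimension exactly `n`. -/
def PreHG.dimIs (S : PreHG) (n : ℕ) : Prop :=
  (S.faces n).Nonempty ∧ ∀ m, n < m → S.faces m = ∅


open Classical

namespace PreHG

variable {T : PreHG}

/-! ### relPow: length-indexed chains -/

def relPow (r : ℕ → ℕ → Prop) : ℕ → ℕ → ℕ → Prop
  | 0, a, b => a = b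
  | (L+1), a, b => ∃ c, r a c ∧ relPow r L c b

theorem relPow_append {r : ℕ → ℕ → Prop} :
    ∀ {p q a c b}, relPow r p a c → relPow r q c b → relPow r (p+q) a b := by
  intro p
  induction p with
  | zero => intro q a c b h1 h2; cases h1; simpa using h2
  | succ p ih =>
    rintro q a c b ⟨d, had, hdc⟩ h2
    have he : p+1+q = (p+q)+1 := by omega
    rw [he]
    exact ⟨d, had, ih hdc h2⟩

theorem relPow_split_last {r : ℕ → ℕ → Prop} :
    ∀ {L a b}, relPow r (L+1) a b → ∃ c, relPow r L a c ∧ r c b := by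
  intro L
  induction L with
  | zero => rintro a b ⟨c, hac, hc⟩; cases hc; exact ⟨a, rfl, hac⟩
  | succ L ih =>
    rintro a b ⟨c, hac, hc⟩
    obtain ⟨d, hd, hdb⟩ := ih hc
    exact ⟨d, ⟨c, hac, hd⟩, hdb⟩

theorem transGen_of_relPow {r : ℕ → ℕ → Prop} :
    ∀ {L a b}, relPow r (L+1) a b → Relation.TransGen r a b := by
  intro L
  induction L with
  | zero => rintro a b ⟨c, hac, hc⟩; cases hc; exact Relation.TransGen.single hac
  | succ L ih => rintro a b ⟨c, hac, hc⟩; exact Relation.TransGen.head hac (ih hc)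

theorem relPow_of_transGen {r : ℕ → ℕ → Prop} {a b : ℕ}
    (h : Relation.TransGen r a b) : ∃ L, relPow r (L+1) a b := by
  induction h with
  | single h => exact ⟨0, _, h, rfl⟩
  | tail _ h ih =>
    obtain ⟨L, hL⟩ := ih
    exact ⟨L+1, relPow_append hL ⟨_, h, rfl⟩⟩

/-! ### maximal elements -/

theorem exists_max_of_irrefl (X : Finset ℕ) (r : ℕ → ℕ → Prop)
    (htr : ∀ {a b c}, r a b → r b c → r a c)
    (hirr : ∀ a ∈ X, ¬ r a a) (hne : X.Nonempty) :
    ∃ m ∈ X, ∀ b ∈ X, ¬ r m b := by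
  classical
  induction X using Finset.strongInduction with
  | _ X ih =>
  obtain ⟨x, hx⟩ := hne
  by_cases hemp : (X.filter (fun b => r x b)).Nonempty
  · have hss : X.filter (fun b => r x b) ⊂ X := by
      refine Finset.ssubset_iff_of_subset (Finset.filter_subset _ _) |>.2 ⟨x, hx, ?_⟩
      simp only [Finset.mem_filter]
      exact fun h => hirr x hx h.2
    obtain ⟨m, hm, hmax⟩ := ih _ hss
      (fun a ha => hirr a (Finset.filter_subset _ _ ha)) hemp
    refine ⟨m, Finset.filter_subset _ _ hm, fun b hb hrb => ?_⟩
    have hxm : r x m := (Finset.mem_filter.1 hm).2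
    exact hmax b (Finset.mem_filter.2 ⟨hb, htr hxm hrb⟩) hrb
  · exact ⟨x, hx, fun b hb hrb => hemp ⟨b, Finset.mem_filter.2 ⟨hb, hrb⟩⟩⟩

/-! ### Basic accessors for positive face structures -/

theorem IsPFS.gamMem (hT : T.IsPFS) {j a : ℕ} (h : a ∈ T.faces (j+1)) :
    T.gam j a ∈ T.faces j := hT.1.1 j a h

theorem IsPFS.delSub (hT : T.IsPFS) {j a : ℕ} (h : a ∈ T.faces (j+1)) :
    T.del j a ⊆ T.faces j := hT.1.2.1 j a h

theorem IsPFS.delNe (hT : T.IsPFS) {j a : ℕ} (h : a ∈ T.faces (j+1)) :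
    (T.del j a).Nonempty := hT.1.2.2.1 j a h

theorem IsPFS.glob (hT : T.IsPFS) : T.Globular := hT.2.2.1
theorem IsPFS.strict (hT : T.IsPFS) : T.StrictPlus := hT.2.2.2.1
theorem IsPFS.linZero (hT : T.IsPFS) : T.LinearZero := hT.2.2.2.2.1
theorem IsPFS.disj (hT : T.IsPFS) : T.Disjointness := hT.2.2.2.2.2.1
theorem IsPFS.pencil (hT : T.IsPFS) : T.Pencil := hT.2.2.2.2.2.2

theorem ltPlusOne_memL (hT : T.IsPFS) {j a b : ℕ} (h : T.ltPlusOne j a b) :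
    a ∈ T.faces j := by
  obtain ⟨α, hα, ha, _⟩ := h
  exact hT.delSub hα ha

theorem ltPlusOne_memR (hT : T.IsPFS) {j a b : ℕ} (h : T.ltPlusOne j a b) :
    b ∈ T.faces j := by
  obtain ⟨α, hα, _, hb⟩ := h
  exact hb ▸ hT.gamMem hα

theorem ltPlus_memL (hT : T.IsPFS) {j a b : ℕ} (h : T.ltPlus j a b) :
    a ∈ T.faces j := by
  rw [ltPlus, Relation.TransGen.head'_iff] at h
  obtain ⟨c, h1, _⟩ := h
  exact ltPlusOne_memL hT h1

theorem ltPlus_memR (hT : T.IsPFS) {j a b : ℕ} (h : T.ltPlus j a b) :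
    b ∈ T.faces j := by
  rw [ltPlus, Relation.TransGen.tail'_iff] at h
  obtain ⟨c, _, h1⟩ := h
  exact ltPlusOne_memR hT h1

theorem noLoop (hT : T.IsPFS) {j α : ℕ} (hα : α ∈ T.faces (j+1)) :
    T.gam j α ∉ T.del j α := by
  intro h
  exact hT.strict j _ (hT.gamMem hα)
    (Relation.TransGen.single ⟨α, hα, h, rfl⟩)

/-! ### measures -/

noncomputable def mUp (T : PreHG) (j a : ℕ) : ℕ :=
  ((T.faces j).filter (fun x => T.ltPlus j a x)).card

noncomputable def mDown (T : PreHG) (j a : ℕ) : ℕ :=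
  ((T.faces j).filter (fun x => T.ltPlus j x a)).card

theorem mUp_le (hT : T.IsPFS) {j a b : ℕ} (h : T.ltPlus j a b) :
    T.mUp j b ≤ T.mUp j a := by
  apply Finset.card_le_card
  intro x hx
  simp only [Finset.mem_filter] at *
  exact ⟨hx.1, h.trans hx.2⟩

theorem mUp_lt (hT : T.IsPFS) {j a b : ℕ} (h : T.ltPlusOne j a b) :
    T.mUp j b < T.mUp j a := by
  apply Finset.card_lt_card
  refine Finset.ssubset_iff_of_subset ?_ |>.2 ⟨b, ?_, ?_⟩
  · intro x hx
    simp only [Finset.mem_filter] at *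
    exact ⟨hx.1, Relation.TransGen.head h hx.2⟩
  · simp only [Finset.mem_filter]
    exact ⟨ltPlusOne_memR hT h, Relation.TransGen.single h⟩
  · simp only [Finset.mem_filter, not_and]
    intro hb
    exact hT.strict j b hb

theorem mUp_lt' (hT : T.IsPFS) {j a b : ℕ} (h : T.ltPlus j a b) :
    T.mUp j b < T.mUp j a := by
  rw [ltPlus, Relation.TransGen.head'_iff] at h
  obtain ⟨c, h1, h2⟩ := h
  rcases (Relation.reflTransGen_iff_eq_or_transGen.1 h2) with rfl | h2
  · exact mUp_lt hT h1
  · exact lt_of_le_of_lt (mUp_le hT h2) (mUp_lt hT h1)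

theorem mDown_le (hT : T.IsPFS) {j a b : ℕ} (h : T.ltPlus j a b) :
    T.mDown j a ≤ T.mDown j b := by
  apply Finset.card_le_card
  intro x hx
  simp only [Finset.mem_filter] at *
  exact ⟨hx.1, hx.2.trans h⟩

theorem mDown_lt (hT : T.IsPFS) {j a b : ℕ} (h : T.ltPlusOne j a b) :
    T.mDown j a < T.mDown j b := by
  apply Finset.card_lt_card
  refine Finset.ssubset_iff_of_subset ?_ |>.2 ⟨a, ?_, ?_⟩
  · intro x hx
    simp only [Finset.mem_filter] at *
    exact ⟨hx.1, Relation.TransGen.tail hx.2 h⟩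
  · simp only [Finset.mem_filter]
    exact ⟨ltPlusOne_memL hT h, Relation.TransGen.single h⟩
  · simp only [Finset.mem_filter, not_and]
    intro ha
    exact hT.strict j a ha

theorem mDown_lt' (hT : T.IsPFS) {j a b : ℕ} (h : T.ltPlus j a b) :
    T.mDown j a < T.mDown j b := by
  rw [ltPlus, Relation.TransGen.tail'_iff] at h
  obtain ⟨c, h2, h1⟩ := h
  rcases (Relation.reflTransGen_iff_eq_or_transGen.1 h2) with rfl | h2
  · exact mDown_lt hT h1
  · exact lt_of_le_of_lt (mDown_le hT h2) (mDown_lt hT h1)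

/-- squeeze: mutual `≤⁺` gives equality. -/
theorem squeeze (hT : T.IsPFS) {j a b : ℕ} (hmem : a ∈ T.faces j)
    (h1 : a = b ∨ T.ltPlus j a b) (h2 : b = a ∨ T.ltPlus j b a) : a = b := by
  rcases h1 with rfl | h1
  · rfl
  rcases h2 with rfl | h2
  · rfl
  exact absurd (h1.trans h2) (hT.strict j a hmem)

end PreHG
namespace PreHG

variable {T : PreHG}

theorem mem_delS {j : ℕ} {A : Finset ℕ} {x : ℕ} :
    x ∈ T.delS j A ↔ ∃ a ∈ A, x ∈ T.del j a := Finset.mem_biUnion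

theorem mem_gamS {j : ℕ} {A : Finset ℕ} {x : ℕ} :
    x ∈ T.gamS j A ↔ ∃ a ∈ A, T.gam j a = x := Finset.mem_image

/-- γγW is in γδW but not in δδW. -/
theorem glob_gg (hT : T.IsPFS) {j W : ℕ} (hW : W ∈ T.faces (j+2)) :
    T.gam j (T.gam (j+1) W) ∈ T.gamS j (T.del (j+1) W) ∧
      T.gam j (T.gam (j+1) W) ∉ T.delS j (T.del (j+1) W) := by
  have h := (hT.glob j W hW).1
  have : T.gam j (T.gam (j+1) W) ∈ ({T.gam j (T.gam (j+1) W)} : Finset ℕ) :=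
    Finset.mem_singleton_self _
  rw [h, Finset.mem_sdiff] at this
  exact this

/-- An element of γδW distinct from γγW is in δδW. -/
theorem glob_gamS_cases (hT : T.IsPFS) {j W c : ℕ} (hW : W ∈ T.faces (j+2))
    (hc : c ∈ T.gamS j (T.del (j+1) W)) :
    c = T.gam j (T.gam (j+1) W) ∨ c ∈ T.delS j (T.del (j+1) W) := by
  by_cases hd : c ∈ T.delS j (T.del (j+1) W)
  · exact Or.inr hd
  · left
    have : c ∈ ({T.gam j (T.gam (j+1) W)} : Finset ℕ) := by
      rw [(hT.glob j W hW).1, Finset.mem_sdiff]; exact ⟨hc, hd⟩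
    exact Finset.mem_singleton.1 this

theorem glob_del (hT : T.IsPFS) {j W : ℕ} (hW : W ∈ T.faces (j+2)) :
    T.del j (T.gam (j+1) W)
      = T.delS j (T.del (j+1) W) \ T.gamS j (T.del (j+1) W) :=
  (hT.glob j W hW).2

/-- Elements of γδW are `≤⁺ γγW`. -/
theorem gchain (hT : T.IsPFS) {j W : ℕ} (hW : W ∈ T.faces (j+2)) :
    ∀ c ∈ T.gamS j (T.del (j+1) W),
      c = T.gam j (T.gam (j+1) W) ∨ T.ltPlus j c (T.gam j (T.gam (j+1) W)) := by
  have key : ∀ N c, T.mUp j c ≤ N → c ∈ T.gamS j (T.del (j+1) W) →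
      c = T.gam j (T.gam (j+1) W) ∨ T.ltPlus j c (T.gam j (T.gam (j+1) W)) := by
    intro N
    induction N using Nat.strong_induction_on with
    | _ N ih =>
    intro c hcN hc
    rcases glob_gamS_cases hT hW hc with h | h
    · exact Or.inl h
    · obtain ⟨t, ht, hct⟩ := mem_delS.1 h
      have htf : t ∈ T.faces (j+1) := hT.delSub hW ht
      have hop : T.ltPlusOne j c (T.gam j t) := ⟨t, htf, hct, rfl⟩
      have hmem : T.gam j t ∈ T.gamS j (T.del (j+1) W) := mem_gamS.2 ⟨t, ht, rfl⟩
      have hlt : T.mUp j (T.gam j t) < N := lt_of_lt_of_le (mUp_lt hT hop) hcN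
      rcases ih _ hlt _ le_rfl hmem with h' | h'
      · exact Or.inr (h' ▸ Relation.TransGen.single hop)
      · exact Or.inr (Relation.TransGen.head hop h')
  exact fun c hc => key (T.mUp j c) c le_rfl hc

theorem gam_mono_one (hT : T.IsPFS) {j u u' : ℕ} (h : T.ltPlusOne (j+1) u u') :
    T.gam j u = T.gam j u' ∨ T.ltPlus j (T.gam j u) (T.gam j u') := by
  obtain ⟨V, hV, hu, rfl⟩ := h
  exact gchain hT hV _ (mem_gamS.2 ⟨u, hu, rfl⟩)

theorem gam_mono (hT : T.IsPFS) {j u u' : ℕ} (h : T.ltPlus (j+1) u u') :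
    T.gam j u = T.gam j u' ∨ T.ltPlus j (T.gam j u) (T.gam j u') := by
  induction h with
  | single h => exact gam_mono_one hT h
  | tail _ h2 ih =>
    rcases ih with h' | h' <;> rcases gam_mono_one hT h2 with h'' | h''
    · exact Or.inl (h' ▸ h'')
    · exact Or.inr (h' ▸ h'')
    · exact Or.inr (h'' ▸ h')
    · exact Or.inr (h'.trans h'')

/-- descent step: an element of δδV descends to an element of δγV. -/
theorem descStep (hT : T.IsPFS) {j V : ℕ} (hV : V ∈ T.faces (j+2)) :
    ∀ z ∈ T.delS j (T.del (j+1) V),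
      ∃ z' ∈ T.del j (T.gam (j+1) V), z' = z ∨ T.ltPlus j z' z := by
  have key : ∀ N z, T.mDown j z ≤ N → z ∈ T.delS j (T.del (j+1) V) →
      ∃ z' ∈ T.del j (T.gam (j+1) V), z' = z ∨ T.ltPlus j z' z := by
    intro N
    induction N using Nat.strong_induction_on with
    | _ N ih =>
    intro z hzN hz
    by_cases hg : z ∈ T.gamS j (T.del (j+1) V)
    · obtain ⟨d, hd, rfl⟩ := mem_gamS.1 hg
      have hdf : d ∈ T.faces (j+1) := hT.delSub hV hd
      obtain ⟨z'', hz''⟩ := hT.delNe hdf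
      have hop : T.ltPlusOne j z'' (T.gam j d) := ⟨d, hdf, hz'', rfl⟩
      have hz''mem : z'' ∈ T.delS j (T.del (j+1) V) := mem_delS.2 ⟨d, hd, hz''⟩
      have hlt : T.mDown j z'' < N := lt_of_lt_of_le (mDown_lt hT hop) hzN
      obtain ⟨z', hz', hle⟩ := ih _ hlt _ le_rfl hz''mem
      refine ⟨z', hz', Or.inr ?_⟩
      rcases hle with rfl | hle
      · exact Relation.TransGen.single hop
      · exact Relation.TransGen.tail hle hop
    · refine ⟨z, ?_, Or.inl rfl⟩
      rw [glob_del hT hV, Finset.mem_sdiff]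
      exact ⟨hz, hg⟩
  exact fun z hz => key (T.mDown j z) z le_rfl hz

/-- transport of δ-elements along `<⁺` one dimension up. -/
theorem transport (hT : T.IsPFS) {j u u' : ℕ} (h : T.ltPlus (j+1) u u') :
    ∀ z ∈ T.del j u, ∃ z' ∈ T.del j u', z' = z ∨ T.ltPlus j z' z := by
  induction h with
  | single h =>
    obtain ⟨V, hV, huV, rfl⟩ := h
    intro z hz
    exact descStep hT hV z (mem_delS.2 ⟨u, huV, hz⟩)
  | tail _ h2 ih =>
    intro z hz
    obtain ⟨z₁, hz₁, hle₁⟩ := ih z hz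
    obtain ⟨V, hV, hcV, rfl⟩ := h2
    obtain ⟨z', hz', hle₂⟩ := descStep hT hV z₁ (mem_delS.2 ⟨_, hcV, hz₁⟩)
    refine ⟨z', hz', ?_⟩
    rcases hle₁ with rfl | hle₁ <;> rcases hle₂ with rfl | hle₂
    · exact Or.inl rfl
    · exact Or.inr hle₂
    · exact Or.inr hle₁
    · exact Or.inr (hle₂.trans hle₁)

/-- every `<⁺` chain comes with initial/terminal witnesses related by `<⁻`. -/
theorem chain_minus (hT : T.IsPFS) {j β β' : ℕ} (h : T.ltPlus j β β') :
    ∃ w₁ wp, w₁ ∈ T.faces (j+1) ∧ wp ∈ T.faces (j+1) ∧ β ∈ T.del j w₁ ∧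
      T.gam j wp = β' ∧ (w₁ = wp ∨ T.ltMinus (j+1) w₁ wp) := by
  induction h with
  | single h =>
    obtain ⟨w, hw, hb, hg⟩ := h
    exact ⟨w, w, hw, hw, hb, hg, Or.inl rfl⟩
  | tail _ h2 ih =>
    obtain ⟨w', hw', hc, hg'⟩ := h2
    obtain ⟨w₁, wp, hw₁, hwp, hβ, hγ, hrel⟩ := ih
    have hstep : T.ltMinusOne (j+1) wp w' := ⟨hwp, hw', hγ ▸ hc⟩
    refine ⟨w₁, w', hw₁, hw', hβ, hg', Or.inr ?_⟩
    rcases hrel with rfl | hrel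
    · exact Relation.TransGen.single hstep
    · exact Relation.TransGen.tail hrel hstep

theorem minus_proj (hT : T.IsPFS) {j V W : ℕ} (h : T.ltMinus (j+1) V W) :
    T.ltPlus j (T.gam j V) (T.gam j W) := by
  induction h with
  | single h => exact Relation.TransGen.single ⟨_, h.2.1, h.2.2, rfl⟩
  | tail _ h2 ih => exact Relation.TransGen.tail ih ⟨_, h2.2.1, h2.2.2, rfl⟩

/-- No comparability: two δ-elements of a single face are never `<⁺`-related. -/
theorem NC (hT : T.IsPFS) {j a β β' : ℕ} (ha : a ∈ T.faces (j+1))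
    (hβ : β ∈ T.del j a) (hβ' : β' ∈ T.del j a) : ¬ T.ltPlus j β β' := by
  intro h
  obtain ⟨w₁, wp, hw₁, hwp, hβw, hγ, hrel⟩ := chain_minus hT h
  have hstep : T.ltMinusOne (j+1) wp a := ⟨hwp, ha, hγ ▸ hβ'⟩
  have hw1a : T.ltMinus (j+1) w₁ a := by
    rcases hrel with rfl | hrel
    · exact Relation.TransGen.single hstep
    · exact Relation.TransGen.tail hrel hstep
  rcases (hT.pencil j β).2 w₁ a hw₁ ha hβw hβ with rfl | hperp
  · exact hT.strict j _ (hT.gamMem ha) (minus_proj hT hw1a)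
  · exact hT.disj j w₁ a hw₁ ha ⟨hperp, Or.inl hw1a⟩

end PreHG
namespace PreHG

variable {T : PreHG}

/-- internal faces of dimension j (w.r.t. the faces of dimension j+2) -/
def ISet (T : PreHG) (j : ℕ) : Finset ℕ := (T.faces (j+2)).biUnion (T.iota j)

/-- hop witnessed by an external (j+1)-face -/
def relC (T : PreHG) (j : ℕ) (a b : ℕ) : Prop :=
  ∃ α, α ∈ T.faces (j+1) ∧ α ∉ T.delS (j+1) (T.faces (j+2)) ∧
    a ∈ T.del j α ∧ T.gam j α = b

theorem mem_ISet {j x : ℕ} : x ∈ ISet T j ↔ ∃ A ∈ T.faces (j+2),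
    x ∈ T.delS j (T.del (j+1) A) ∧ x ∈ T.gamS j (T.del (j+1) A) := by
  simp [ISet, iota, Finset.mem_biUnion, Finset.mem_inter]

section Top1

variable {j : ℕ} (hT : T.IsPFS) (htop : T.faces (j+3) = ∅)
include hT htop

theorem no_perp_top : ∀ a b : ℕ, ¬ T.ltPlus (j+2) a b := by
  intro a b h
  rw [ltPlus, Relation.TransGen.head'_iff] at h
  obtain ⟨c, ⟨α, hα, _⟩, _⟩ := h
  rw [htop] at hα
  exact absurd hα (Finset.notMem_empty α)

theorem parentUnique {β A A' : ℕ} (hA : A ∈ T.faces (j+2)) (hA' : A' ∈ T.faces (j+2))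
    (h1 : β ∈ T.del (j+1) A) (h2 : β ∈ T.del (j+1) A') : A = A' := by
  rcases (hT.pencil (j+1) β).2 A A' hA hA' h1 h2 with h | h
  · exact h
  · rcases h with h | h <;> exact absurd h (no_perp_top hT htop _ _)

theorem ext_no_out {a : ℕ}
    (hext : a ∉ T.delS (j+1) (T.faces (j+2))) : ∀ z, ¬ T.ltPlus (j+1) a z := by
  intro z h
  rw [ltPlus, Relation.TransGen.head'_iff] at h
  obtain ⟨c, ⟨V, hV, haV, _⟩, _⟩ := h
  exact hext (mem_delS.2 ⟨V, hV, haV⟩)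

/-- H2: the δ-elements of an external face are not internal. -/
theorem extNoIotaDel {a : ℕ} (ha : a ∈ T.faces (j+1))
    (hext : a ∉ T.delS (j+1) (T.faces (j+2))) {x : ℕ} (hx : x ∈ T.del j a) :
    x ∉ ISet T j := by
  intro hxI
  obtain ⟨A, hA, hδδ, hγδ⟩ := mem_ISet.1 hxI
  obtain ⟨β₁, hβ₁A, hxβ₁⟩ := mem_delS.1 hδδ
  obtain ⟨β₂, hβ₂A, hgβ₂⟩ := mem_gamS.1 hγδ
  have hβ₁f : β₁ ∈ T.faces (j+1) := hT.delSub hA hβ₁A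
  have hβ₂f : β₂ ∈ T.faces (j+1) := hT.delSub hA hβ₂A
  -- a vs β₁ in the δ-fiber of x
  rcases (hT.pencil j x).2 a β₁ ha hβ₁f hx hxβ₁ with rfl | hperp
  · exact hext (mem_delS.2 ⟨A, hA, hβ₁A⟩)
  rcases hperp with h | h
  · exact ext_no_out hT htop hext _ h
  -- β₁ <⁺ a : decompose the first hop
  rw [ltPlus, Relation.TransGen.head'_iff] at h
  obtain ⟨u, ⟨V₁, hV₁, hβ₁V₁, hgV₁⟩, hrest⟩ := h
  have hV₁A : V₁ = A := parentUnique hT htop hV₁ hA hβ₁V₁ hβ₁A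
  subst hV₁A
  -- take z ∈ δβ₂ and transport it to δa
  obtain ⟨z, hz⟩ := hT.delNe hβ₂f
  have hzδδ : z ∈ T.delS j (T.del (j+1) V₁) := mem_delS.2 ⟨β₂, hβ₂A, hz⟩
  obtain ⟨z₁, hz₁u, hle₁⟩ := descStep hT hV₁ z hzδδ
  rw [hgV₁] at hz₁u
  have hfin : ∃ zm ∈ T.del j a, zm = z ∨ T.ltPlus j zm z := by
    rcases Relation.reflTransGen_iff_eq_or_transGen.1 hrest with rfl | h'
    · exact ⟨z₁, hz₁u, hle₁⟩
    · obtain ⟨zm, hzm, hle₂⟩ := transport hT h' z₁ hz₁u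
      refine ⟨zm, hzm, ?_⟩
      rcases hle₁ with rfl | h₁ <;> rcases hle₂ with rfl | h₂
      · exact Or.inl rfl
      · exact Or.inr h₂
      · exact Or.inr h₁
      · exact Or.inr (h₂.trans h₁)
  obtain ⟨zm, hzma, hle⟩ := hfin
  have hzx : T.ltPlus j z x := Relation.TransGen.single ⟨β₂, hβ₂f, hz, hgβ₂⟩
  have : T.ltPlus j zm x := by
    rcases hle with rfl | h'
    · exact hzx
    · exact h'.trans hzx
  exact NC hT ha hzma hx this

/-- H1: the codomain of an external face is not internal. -/
theorem extNoIotaGam {a : ℕ} (ha : a ∈ T.faces (j+1))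
    (hext : a ∉ T.delS (j+1) (T.faces (j+2))) :
    T.gam j a ∉ ISet T j := by
  intro hxI
  obtain ⟨A, hA, hδδ, hγδ⟩ := mem_ISet.1 hxI
  obtain ⟨β₁, hβ₁A, hxβ₁⟩ := mem_delS.1 hδδ
  obtain ⟨β₂, hβ₂A, hgβ₂⟩ := mem_gamS.1 hγδ
  have hβ₂f : β₂ ∈ T.faces (j+1) := hT.delSub hA hβ₂A
  rcases (hT.pencil j (T.gam j a)).1 a β₂ ha hβ₂f rfl hgβ₂ with rfl | hperp
  · exact hext (mem_delS.2 ⟨A, hA, hβ₂A⟩)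
  rcases hperp with h | h
  · exact ext_no_out hT htop hext _ h
  -- β₂ <⁺ a
  rw [ltPlus, Relation.TransGen.head'_iff] at h
  obtain ⟨u, ⟨V₁, hV₁, hβ₂V₁, hgV₁⟩, hrest⟩ := h
  have hV₁A : V₁ = A := parentUnique hT htop hV₁ hA hβ₂V₁ hβ₂A
  subst hV₁A
  have h1 : T.gam j β₂ = T.gam j u ∨ T.ltPlus j (T.gam j β₂) (T.gam j u) :=
    gam_mono_one hT ⟨V₁, hV₁, hβ₂V₁, hgV₁⟩
  have h2 : T.gam j u = T.gam j a ∨ T.ltPlus j (T.gam j u) (T.gam j a) := by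
    rcases Relation.reflTransGen_iff_eq_or_transGen.1 hrest with rfl | h'
    · exact Or.inl rfl
    · exact gam_mono hT h'
  have hgaf : T.gam j a ∈ T.faces j := hT.gamMem ha
  have hkey : T.gam j u = T.gam j a := by
    rcases h1 with h1 | h1 <;> rcases h2 with h2 | h2
    · exact h2
    · rw [← h1, hgβ₂] at h2
      exact absurd h2 (hT.strict j _ hgaf)
    · exact h2
    · have := h1.trans h2
      rw [hgβ₂] at this
      exact absurd this (hT.strict j _ hgaf)
  -- γa = γγA, contradiction with γa ∈ δδA
  have hgg : T.gam j (T.gam (j+1) V₁) = T.gam j a := by rw [hgV₁, hkey]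
  have := (glob_gg hT hV₁).2
  rw [hgg] at this
  exact this (mem_delS.2 ⟨β₁, hβ₁A, hxβ₁⟩)

/-- Single-step externalization when both endpoints are non-internal. -/
theorem stepC {c c' : ℕ} (hc : c ∉ ISet T j) (hc' : c' ∉ ISet T j)
    (h : T.ltPlusOne j c c') : relC T j c c' := by
  obtain ⟨v, hv, hcv, hgv⟩ := h
  have key : ∀ N v, T.mUp (j+1) v ≤ N → v ∈ T.faces (j+1) → c ∈ T.del j v →
      T.gam j v = c' → relC T j c c' := by
    intro N
    induction N using Nat.strong_induction_on with
    | _ N ih =>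
    intro v hvN hv hcv hgv
    by_cases hve : v ∈ T.delS (j+1) (T.faces (j+2))
    · obtain ⟨A, hA, hvA⟩ := mem_delS.1 hve
      have hc'γδ : c' ∈ T.gamS j (T.del (j+1) A) := mem_gamS.2 ⟨v, hvA, hgv⟩
      have hc'gg : c' = T.gam j (T.gam (j+1) A) := by
        rcases glob_gamS_cases hT hA hc'γδ with h' | h'
        · exact h'
        · exact absurd (mem_ISet.2 ⟨A, hA, h', hc'γδ⟩) hc'
      have hcδδ : c ∈ T.delS j (T.del (j+1) A) := mem_delS.2 ⟨v, hvA, hcv⟩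
      have hcγδ : c ∉ T.gamS j (T.del (j+1) A) := fun h' =>
        hc (mem_ISet.2 ⟨A, hA, hcδδ, h'⟩)
      have hcnext : c ∈ T.del j (T.gam (j+1) A) := by
        rw [glob_del hT hA, Finset.mem_sdiff]; exact ⟨hcδδ, hcγδ⟩
      have hvlt : T.ltPlusOne (j+1) v (T.gam (j+1) A) := ⟨A, hA, hvA, rfl⟩
      exact ih _ (lt_of_lt_of_le (mUp_lt hT hvlt) hvN) _ le_rfl
        (hT.gamMem hA) hcnext hc'gg.symm
    · exact ⟨v, hv, hve, hcv, hgv⟩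
  exact key (T.mUp (j+1) v) v le_rfl hv hcv hgv

/-- Obstruction analysis for the final hop into a non-internal face. -/
theorem obstruct {v c b : ℕ} (hv : v ∈ T.faces (j+1)) (hcv : c ∈ T.del j v)
    (hgv : T.gam j v = b) (hbI : b ∉ ISet T j) (hcI : c ∈ ISet T j) :
    ∃ A ∈ T.faces (j+2), ∃ β₂ ∈ T.del (j+1) A, ∃ β₁ ∈ T.del (j+1) A,
      T.gam j β₂ = c ∧ b = T.gam j (T.gam (j+1) A) ∧ c ∈ T.del j β₁ := by
  have key : ∀ N v, T.mUp (j+1) v ≤ N → v ∈ T.faces (j+1) → c ∈ T.del j v →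
      T.gam j v = b →
      ∃ A ∈ T.faces (j+2), ∃ β₂ ∈ T.del (j+1) A, ∃ β₁ ∈ T.del (j+1) A,
        T.gam j β₂ = c ∧ b = T.gam j (T.gam (j+1) A) ∧ c ∈ T.del j β₁ := by
    intro N
    induction N using Nat.strong_induction_on with
    | _ N ih =>
    intro v hvN hv hcv hgv
    by_cases hve : v ∈ T.delS (j+1) (T.faces (j+2))
    · obtain ⟨A, hA, hvA⟩ := mem_delS.1 hve
      have hbγδ : b ∈ T.gamS j (T.del (j+1) A) := mem_gamS.2 ⟨v, hvA, hgv⟩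
      have hbgg : b = T.gam j (T.gam (j+1) A) := by
        rcases glob_gamS_cases hT hA hbγδ with h' | h'
        · exact h'
        · exact absurd (mem_ISet.2 ⟨A, hA, h', hbγδ⟩) hbI
      have hcδδ : c ∈ T.delS j (T.del (j+1) A) := mem_delS.2 ⟨v, hvA, hcv⟩
      by_cases hcγδ : c ∈ T.gamS j (T.del (j+1) A)
      · obtain ⟨β₂, hβ₂A, hgβ₂⟩ := mem_gamS.1 hcγδ
        exact ⟨A, hA, β₂, hβ₂A, v, hvA, hgβ₂, hbgg, hcv⟩
      · have hcnext : c ∈ T.del j (T.gam (j+1) A) := by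
          rw [glob_del hT hA, Finset.mem_sdiff]; exact ⟨hcδδ, hcγδ⟩
        have hvlt : T.ltPlusOne (j+1) v (T.gam (j+1) A) := ⟨A, hA, hvA, rfl⟩
        exact ih _ (lt_of_lt_of_le (mUp_lt hT hvlt) hvN) _ le_rfl
          (hT.gamMem hA) hcnext hbgg.symm
    · exact absurd hcI (extNoIotaDel hT htop hv hve hcv)
  exact key (T.mUp (j+1) v) v le_rfl hv hcv hgv

end Top1

end PreHG
namespace PreHG

variable {T : PreHG}

section Top1

variable {j : ℕ} (hT : T.IsPFS) (htop : T.faces (j+3) = ∅)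
include hT htop

/-- The rear-processing of a chain whose final segment runs through internal faces. -/
theorem rear (a b : ℕ) (L : ℕ) (haI : a ∉ ISet T j) (hbI : b ∉ ISet T j)
    (OIH : ∀ M, M < L → relPow (T.ltPlusOne j) (M+1) a b →
      Relation.TransGen (relC T j) a b) :
    ∀ L' N w c'' c₀ A β₂ β₁ s p,
      relPow (T.ltPlusOne j) L' a c'' →
      w ∈ T.faces (j+1) → T.mUp (j+1) w ≤ N → c'' ∈ T.del j w → T.gam j w = c₀ →
      A ∈ T.faces (j+2) → β₂ ∈ T.del (j+1) A → T.gam j β₂ = c₀ →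
      β₁ ∈ T.del (j+1) A → c₀ ∈ T.del j β₁ →
      relPow (T.ltPlusOne j) p c₀ b →
      relPow (T.ltPlusOne j) s (T.gam j (T.gam (j+1) A)) b →
      s + 1 ≤ p → L' + p ≤ L →
      Relation.TransGen (relC T j) a b := by
  intro L'
  induction L' using Nat.strong_induction_on with
  | _ L' ihL =>
  intro N
  induction N using Nat.strong_induction_on with
  | _ N ihN =>
  intro w c'' c₀ A β₂ β₁ s p hpow hw hwN hc''w hgw hA hβ₂A hgβ₂ hβ₁A hc₀β₁ hp hs hsp hLp
  have hβ₂f : β₂ ∈ T.faces (j+1) := hT.delSub hA hβ₂A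
  have hc₀mem : c₀ ∈ T.faces j := hgw ▸ hT.gamMem hw
  rcases (hT.pencil j c₀).1 w β₂ hw hβ₂f hgw hgβ₂ with heq | hperp
  · -- w = β₂
    subst heq
    have hc''δδ : c'' ∈ T.delS j (T.del (j+1) A) := mem_delS.2 ⟨w, hβ₂A, hc''w⟩
    by_cases hcg : c'' ∈ T.gamS j (T.del (j+1) A)
    · -- DESCEND
      have hc''I : c'' ∈ ISet T j := mem_ISet.2 ⟨A, hA, hc''δδ, hcg⟩
      cases L' with
      | zero =>
        have hac : a = c'' := hpow
        exact absurd (hac ▸ hc''I) haI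
      | succ L'' =>
        obtain ⟨c₃, hpow', hlast⟩ := relPow_split_last hpow
        obtain ⟨w', hw', hc₃w', hgw'⟩ := hlast
        obtain ⟨d, hdA, hgd⟩ := mem_gamS.1 hcg
        have hop : T.ltPlusOne j c'' c₀ := ⟨w, hw, hc''w, hgw⟩
        exact ihL L'' (by omega) (T.mUp (j+1) w') w' c₃ c'' A d w s (p+1)
          hpow' hw' le_rfl hc₃w' hgw' hA hdA hgd hβ₂A hc''w ⟨c₀, hop, hp⟩ hs
          (by omega) (by omega)
    · -- EXIT
      have hc''exit : c'' ∈ T.del j (T.gam (j+1) A) := by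
        rw [glob_del hT hA, Finset.mem_sdiff]; exact ⟨hc''δδ, hcg⟩
      have hopE : T.ltPlusOne j c'' (T.gam j (T.gam (j+1) A)) :=
        ⟨_, hT.gamMem hA, hc''exit, rfl⟩
      have hchain : relPow (T.ltPlusOne j) (L' + (s+1)) a b :=
        relPow_append hpow ⟨_, hopE, hs⟩
      have he : L' + (s+1) = (L' + s) + 1 := by omega
      rw [he] at hchain
      exact OIH (L'+s) (by omega) hchain
  · rcases hperp with hlt | hlt
    · -- ASCEND or SWITCH : w <⁺ β₂
      rw [ltPlus, Relation.TransGen.head'_iff] at hlt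
      obtain ⟨u₁, ⟨W₁, hW₁, hwW₁, hgW₁⟩, hrest⟩ := hlt
      have h1 := gam_mono_one hT (⟨W₁, hW₁, hwW₁, hgW₁⟩ :
        T.ltPlusOne (j+1) w u₁)
      have h2 : T.gam j u₁ = T.gam j β₂ ∨ T.ltPlus j (T.gam j u₁) (T.gam j β₂) := by
        rcases Relation.reflTransGen_iff_eq_or_transGen.1 hrest with rfl | h'
        · exact Or.inl rfl
        · exact gam_mono hT h'
      have hgu₁ : T.gam j u₁ = c₀ := by
        rcases h1 with h1 | h1 <;> rcases h2 with h2 | h2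
        · rw [h2, hgβ₂]
        · rw [hgβ₂] at h2; rw [← h1, hgw] at h2
          exact absurd h2 (hT.strict j _ hc₀mem)
        · rw [h2, hgβ₂]
        · have := h1.trans h2
          rw [hgw, hgβ₂] at this
          exact absurd this (hT.strict j _ hc₀mem)
      have hc''δδW : c'' ∈ T.delS j (T.del (j+1) W₁) := mem_delS.2 ⟨w, hwW₁, hc''w⟩
      by_cases hcg : c'' ∈ T.gamS j (T.del (j+1) W₁)
      · -- SWITCH
        have hc''I : c'' ∈ ISet T j := mem_ISet.2 ⟨W₁, hW₁, hc''δδW, hcg⟩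
        cases L' with
        | zero =>
          have hac : a = c'' := hpow
          exact absurd (hac ▸ hc''I) haI
        | succ L'' =>
          obtain ⟨c₃, hpow', hlast⟩ := relPow_split_last hpow
          obtain ⟨w', hw', hc₃w', hgw'⟩ := hlast
          obtain ⟨d, hdW, hgd⟩ := mem_gamS.1 hcg
          have hop : T.ltPlusOne j c'' c₀ := ⟨w, hw, hc''w, hgw⟩
          have hsnew : relPow (T.ltPlusOne j) p (T.gam j (T.gam (j+1) W₁)) b := by
            rw [hgW₁, hgu₁]; exact hp
          exact ihL L'' (by omega) (T.mUp (j+1) w') w' c₃ c'' W₁ d w p (p+1)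
            hpow' hw' le_rfl hc₃w' hgw' hW₁ hdW hgd hwW₁ hc''w ⟨c₀, hop, hp⟩ hsnew
            (by omega) (by omega)
      · -- ASCEND
        have hc''next : c'' ∈ T.del j u₁ := by
          have hgd := glob_del hT hW₁
          rw [hgW₁] at hgd
          rw [hgd, Finset.mem_sdiff]
          exact ⟨hc''δδW, hcg⟩
        have hwlt : T.ltPlusOne (j+1) w u₁ := ⟨W₁, hW₁, hwW₁, hgW₁⟩
        exact ihN (T.mUp (j+1) u₁) (lt_of_lt_of_le (mUp_lt hT hwlt) hwN)
          u₁ c'' c₀ A β₂ β₁ s p hpow (hgW₁ ▸ hT.gamMem hW₁) le_rfl hc''next hgu₁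
          hA hβ₂A hgβ₂ hβ₁A hc₀β₁ hp hs hsp hLp
    · -- CONTRA : β₂ <⁺ w
      rw [ltPlus, Relation.TransGen.head'_iff] at hlt
      obtain ⟨u, ⟨U, hU, hβ₂U, hgU⟩, hrest⟩ := hlt
      have hUA : U = A := parentUnique hT htop hU hA hβ₂U hβ₂A
      subst hUA
      have h1 := gam_mono_one hT (⟨U, hU, hβ₂U, hgU⟩ : T.ltPlusOne (j+1) β₂ u)
      have h2 : T.gam j u = T.gam j w ∨ T.ltPlus j (T.gam j u) (T.gam j w) := by
        rcases Relation.reflTransGen_iff_eq_or_transGen.1 hrest with rfl | h'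
        · exact Or.inl rfl
        · exact gam_mono hT h'
      have hkey : T.gam j u = c₀ := by
        rcases h1 with h1 | h1 <;> rcases h2 with h2 | h2
        · rw [h2, hgw]
        · rw [hgw] at h2; rw [← h1, hgβ₂] at h2
          exact absurd h2 (hT.strict j _ hc₀mem)
        · rw [h2, hgw]
        · have := h1.trans h2
          rw [hgβ₂, hgw] at this
          exact absurd this (hT.strict j _ hc₀mem)
      have hgg : T.gam j (T.gam (j+1) U) = c₀ := by rw [hgU]; exact hkey
      have hnot := (glob_gg hT hU).2
      rw [hgg] at hnot
      exact absurd (mem_delS.2 ⟨β₁, hβ₁A, hc₀β₁⟩) hnot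

/-- MAIN-C: `<⁺`-chains between non-internal faces contract to external-witnessed
chains. -/
theorem mainC : ∀ L a b, relPow (T.ltPlusOne j) (L+1) a b →
    a ∉ ISet T j → b ∉ ISet T j → Relation.TransGen (relC T j) a b := by
  intro L
  induction L using Nat.strong_induction_on with
  | _ L ih =>
  intro a b hpow haI hbI
  obtain ⟨c, hpowL, hlast⟩ := relPow_split_last hpow
  by_cases hcI : c ∈ ISet T j
  · obtain ⟨v, hv, hcv, hgv⟩ := hlast
    obtain ⟨A, hA, β₂, hβ₂A, β₁, hβ₁A, hgβ₂, hbgg, hcβ₁⟩ :=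
      obstruct hT htop hv hcv hgv hbI hcI
    cases L with
    | zero =>
      have hac : a = c := hpowL
      exact absurd (hac ▸ hcI) haI
    | succ L'' =>
      obtain ⟨c'', hpow', hlast'⟩ := relPow_split_last hpowL
      obtain ⟨w, hw, hc''w, hgw⟩ := hlast'
      have hs0 : relPow (T.ltPlusOne j) 0 (T.gam j (T.gam (j+1) A)) b := hbgg.symm
      exact rear hT htop a b (L''+1) haI hbI
        (fun M hM hpw => ih M (by omega) a b hpw haI hbI)
        L'' (T.mUp (j+1) w) w c'' c A β₂ β₁ 0 1
        hpow' hw le_rfl hc''w hgw hA hβ₂A hgβ₂ hβ₁A hcβ₁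
        ⟨b, ⟨v, hv, hcv, hgv⟩, rfl⟩ hs0 (by omega) (by omega)
  · cases L with
    | zero =>
      have hac : a = c := hpowL
      subst hac
      exact Relation.TransGen.single (stepC hT htop hcI hbI hlast)
    | succ L'' =>
      have h1 := ih L'' (by omega) a c hpowL haI hcI
      exact Relation.TransGen.tail h1 (stepC hT htop hcI hbI hlast)

/-- MAIN-C in `ltPlus` form. -/
theorem mainC' {a b : ℕ} (h : T.ltPlus j a b)
    (haI : a ∉ ISet T j) (hbI : b ∉ ISet T j) :
    Relation.TransGen (relC T j) a b := by
  obtain ⟨L, hL⟩ := relPow_of_transGen h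
  exact mainC hT htop L a b hL haI hbI

end Top1

end PreHG
namespace PreHG

variable {T : PreHG}

/-- good-witnessed hop -/
def relP (T : PreHG) (j : ℕ) (P : ℕ → Prop) (a b : ℕ) : Prop :=
  ∃ α, α ∈ T.faces (j+1) ∧ P α ∧ a ∈ T.del j α ∧ T.gam j α = b

/-- Rerouting schema: if every bad witness is a codomain of a (j+2)-face, then
every hop reroutes through good witnesses. -/
theorem reroute (hT : T.IsPFS) {j : ℕ} {P : ℕ → Prop}
    (hbad : ∀ w ∈ T.faces (j+1), ¬ P w → ∃ W ∈ T.faces (j+2), T.gam (j+1) W = w) :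
    ∀ w ∈ T.faces (j+1), ∀ a ∈ T.del j w,
      Relation.TransGen (relP T j P) a (T.gam j w) := by
  have key : ∀ N w, w ∈ T.faces (j+1) → T.mDown (j+1) w ≤ N → ∀ a ∈ T.del j w,
      Relation.TransGen (relP T j P) a (T.gam j w) := by
    intro N
    induction N using Nat.strong_induction_on with
    | _ N ih =>
    intro w hw hwN a ha
    by_cases hP : P w
    · exact Relation.TransGen.single ⟨w, hw, hP, ha, rfl⟩
    · obtain ⟨W, hW, hgW⟩ := hbad w hw hP
      have hdel : T.del j w = T.delS j (T.del (j+1) W) \ T.gamS j (T.del (j+1) W) := by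
        rw [← hgW]; exact glob_del hT hW
      rw [hdel, Finset.mem_sdiff] at ha
      obtain ⟨β₀, hβ₀W, haβ₀⟩ := mem_delS.1 ha.1
      have hβ₀w : T.ltPlusOne (j+1) β₀ w := ⟨W, hW, hβ₀W, hgW⟩
      have ih1 : Relation.TransGen (relP T j P) a (T.gam j β₀) :=
        ih (T.mDown (j+1) β₀) (lt_of_lt_of_le (mDown_lt hT hβ₀w) hwN)
          β₀ (hT.delSub hW hβ₀W) le_rfl a haβ₀
      -- inner: elements of γδW reach γw
      have inner : ∀ M c, T.mUp j c ≤ M → c ∈ T.gamS j (T.del (j+1) W) →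
          c = T.gam j w ∨ Relation.TransGen (relP T j P) c (T.gam j w) := by
        intro M
        induction M using Nat.strong_induction_on with
        | _ M ihM =>
        intro c hcM hc
        have hgg : T.gam j (T.gam (j+1) W) = T.gam j w := by rw [hgW]
        by_cases hceq : c = T.gam j w
        · exact Or.inl hceq
        rcases glob_gamS_cases hT hW hc with h' | h'
        · exact absurd (h'.trans hgg) hceq
        · obtain ⟨t', ht'W, hct'⟩ := mem_delS.1 h'
          have ht'w : T.ltPlusOne (j+1) t' w := ⟨W, hW, ht'W, hgW⟩
          have hstep : Relation.TransGen (relP T j P) c (T.gam j t') :=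
            ih (T.mDown (j+1) t') (lt_of_lt_of_le (mDown_lt hT ht'w) hwN)
              t' (hT.delSub hW ht'W) le_rfl c hct'
          have hhop : T.ltPlusOne j c (T.gam j t') :=
            ⟨t', hT.delSub hW ht'W, hct', rfl⟩
          have hmem : T.gam j t' ∈ T.gamS j (T.del (j+1) W) :=
            mem_gamS.2 ⟨t', ht'W, rfl⟩
          rcases ihM (T.mUp j (T.gam j t'))
              (lt_of_lt_of_le (mUp_lt hT hhop) hcM) _ le_rfl hmem with h'' | h''
          · exact Or.inr (h'' ▸ hstep)
          · exact Or.inr (hstep.trans h'')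
      have hγβ₀ : T.gam j β₀ ∈ T.gamS j (T.del (j+1) W) := mem_gamS.2 ⟨β₀, hβ₀W, rfl⟩
      rcases inner (T.mUp j (T.gam j β₀)) _ le_rfl hγβ₀ with h'' | h''
      · exact h'' ▸ ih1
      · exact ih1.trans h''
  exact fun w hw a ha => key (T.mDown (j+1) w) w hw le_rfl a ha

/-! ### faces of the truncations -/

theorem dT_faces_lt {k l : ℕ} (h : l < k) : (T.dTrunc k).faces l = T.faces l := by
  show (if l < k then _ else _) = _
  rw [if_pos h]

theorem dT_faces_eq (k : ℕ) :
    (T.dTrunc k).faces k = T.faces k \ T.gamS k (T.faces (k+1)) := by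
  show (if k < k then _ else if k = k then _ else _) = _
  rw [if_neg (by omega), if_pos rfl]

theorem dT_faces_gt {k l : ℕ} (h : k < l) : (T.dTrunc k).faces l = ∅ := by
  show (if l < k then _ else if l = k then _ else _) = _
  rw [if_neg (by omega), if_neg (by omega)]

theorem dT_faces_sub {k l : ℕ} : (T.dTrunc k).faces l ⊆ T.faces l := by
  rcases lt_trichotomy l k with h | rfl | h
  · rw [dT_faces_lt h]
  · rw [dT_faces_eq]; exact Finset.sdiff_subset
  · rw [dT_faces_gt h]; exact Finset.empty_subset _

theorem cT_faces_lt {k l : ℕ} (h : l + 1 < k) : (T.cTrunc k).faces l = T.faces l := by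
  show (if l + 1 < k then _ else _) = _
  rw [if_pos h]

theorem cT_faces_pred {k l : ℕ} (h : l + 1 = k) :
    (T.cTrunc k).faces l = T.faces l \ (T.faces (k+1)).biUnion (T.iota l) := by
  show (if l + 1 < k then _ else if l + 1 = k then _ else _) = _
  rw [if_neg (by omega), if_pos h]

theorem cT_faces_eq (k : ℕ) :
    (T.cTrunc k).faces k = T.faces k \ T.delS k (T.faces (k+1)) := by
  show (if k + 1 < k then _ else if k + 1 = k then _ else if k = k then _ else _) = _
  rw [if_neg (by omega), if_neg (by omega), if_pos rfl]

theorem cT_faces_gt {k l : ℕ} (h : k < l) : (T.cTrunc k).faces l = ∅ := by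
  show (if l + 1 < k then _ else if l + 1 = k then _ else if l = k then _ else _) = _
  rw [if_neg (by omega), if_neg (by omega), if_neg (by omega)]

theorem cT_faces_sub {k l : ℕ} : (T.cTrunc k).faces l ⊆ T.faces l := by
  rcases lt_trichotomy l k with h | rfl | h
  · rcases Nat.lt_or_ge (l+1) k with h' | h'
    · rw [cT_faces_lt h']
    · have : l + 1 = k := by omega
      rw [cT_faces_pred this]; exact Finset.sdiff_subset
  · rw [cT_faces_eq]; exact Finset.sdiff_subset
  · rw [cT_faces_gt h]; exact Finset.empty_subset _

theorem dT_ltPlus_le {k j a b : ℕ} (h : (T.dTrunc k).ltPlus j a b) :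
    T.ltPlus j a b := by
  refine Relation.TransGen.mono ?_ _ _ h
  rintro x y ⟨α, hα, hx, hg⟩
  exact ⟨α, dT_faces_sub hα, hx, hg⟩

theorem cT_ltPlus_le {k j a b : ℕ} (h : (T.cTrunc k).ltPlus j a b) :
    T.ltPlus j a b := by
  refine Relation.TransGen.mono ?_ _ _ h
  rintro x y ⟨α, hα, hx, hg⟩
  exact ⟨α, cT_faces_sub hα, hx, hg⟩

theorem dT_ltMinus_le {k j a b : ℕ} (h : (T.dTrunc k).ltMinus j a b) :
    T.ltMinus j a b := by
  refine Relation.TransGen.mono ?_ _ _ h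
  rintro x y hxy
  cases j with
  | zero => exact hxy.elim
  | succ j => exact ⟨dT_faces_sub hxy.1, dT_faces_sub hxy.2.1, hxy.2.2⟩

theorem cT_ltMinus_le {k j a b : ℕ} (h : (T.cTrunc k).ltMinus j a b) :
    T.ltMinus j a b := by
  refine Relation.TransGen.mono ?_ _ _ h
  rintro x y hxy
  cases j with
  | zero => exact hxy.elim
  | succ j => exact ⟨cT_faces_sub hxy.1, cT_faces_sub hxy.2.1, hxy.2.2⟩

/-- ltPlus transfers into dTrunc below the truncation dimension. -/
theorem dT_transfer (hT : T.IsPFS) {k j a b : ℕ} (hjk : j + 1 ≤ k)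
    (h : T.ltPlus j a b) : (T.dTrunc k).ltPlus j a b := by
  rcases Nat.lt_or_ge (j+1) k with hlt | hge
  · refine Relation.TransGen.mono ?_ _ _ h
    rintro x y ⟨α, hα, hx, hg⟩
    exact ⟨α, by rw [dT_faces_lt hlt]; exact hα, hx, hg⟩
  · have hk : j + 1 = k := by omega
    subst hk
    have hb : ∀ w ∈ T.faces (j+1), ¬ (w ∉ T.gamS (j+1) (T.faces (j+2))) →
        ∃ W ∈ T.faces (j+2), T.gam (j+1) W = w := by
      intro w hw hP
      rcases mem_gamS.1 (not_not.1 hP) with ⟨W, hW, hgW⟩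
      exact ⟨W, hW, hgW⟩
    have conv : ∀ x y,
        Relation.TransGen (relP T j (fun α => α ∉ T.gamS (j+1) (T.faces (j+2)))) x y →
        (T.dTrunc (j+1)).ltPlus j x y := by
      intro x y hxy
      refine Relation.TransGen.mono ?_ _ _ hxy
      rintro x y ⟨α, hα, hPα, hx, hg⟩
      exact ⟨α, by rw [dT_faces_eq]; exact Finset.mem_sdiff.2 ⟨hα, hPα⟩, hx, hg⟩
    induction h with
    | single hstep =>
      obtain ⟨w, hw, hxw, hgw⟩ := hstep
      have hr := reroute hT (P := fun α => α ∉ T.gamS (j+1) (T.faces (j+2))) hb w hw _ hxw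
      rw [hgw] at hr
      exact conv _ _ hr
    | tail hchain hstep ih =>
      obtain ⟨w, hw, hxw, hgw⟩ := hstep
      have hr := reroute hT (P := fun α => α ∉ T.gamS (j+1) (T.faces (j+2))) hb w hw _ hxw
      rw [hgw] at hr
      exact ih.trans (conv _ _ hr)

/-- ltPlus transfers into cTrunc two below the truncation dimension. -/
theorem cT_transfer (hT : T.IsPFS) {k j a b : ℕ} (hjk : j + 2 ≤ k)
    (h : T.ltPlus j a b) : (T.cTrunc k).ltPlus j a b := by
  rcases Nat.lt_or_ge (j+2) k with hlt | hge
  · refine Relation.TransGen.mono ?_ _ _ h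
    rintro x y ⟨α, hα, hx, hg⟩
    exact ⟨α, by rw [cT_faces_lt hlt]; exact hα, hx, hg⟩
  · have hk : j + 2 = k := by omega
    subst hk
    have hb : ∀ w ∈ T.faces (j+1), ¬ (w ∉ ISet T (j+1)) →
        ∃ W ∈ T.faces (j+2), T.gam (j+1) W = w := by
      intro w hw hP
      obtain ⟨A, hA, _, hγ⟩ := mem_ISet.1 (not_not.1 hP)
      obtain ⟨β₂, hβ₂A, hgβ₂⟩ := mem_gamS.1 hγ
      exact ⟨β₂, hT.delSub hA hβ₂A, hgβ₂⟩
    have conv : ∀ x y, Relation.TransGen (relP T j (fun α => α ∉ ISet T (j+1))) x y →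
        (T.cTrunc (j+2)).ltPlus j x y := by
      intro x y hxy
      refine Relation.TransGen.mono ?_ _ _ hxy
      rintro x y ⟨α, hα, hPα, hx, hg⟩
      refine ⟨α, ?_, hx, hg⟩
      rw [cT_faces_pred (by omega : j + 1 + 1 = j + 2)]
      exact Finset.mem_sdiff.2 ⟨hα, hPα⟩
    induction h with
    | single hstep =>
      obtain ⟨w, hw, hxw, hgw⟩ := hstep
      have := reroute hT (P := fun α => α ∉ ISet T (j+1)) hb w hw _ hxw
      rw [hgw] at this
      exact conv _ _ this
    | tail hchain hstep ih =>
      obtain ⟨w, hw, hxw, hgw⟩ := hstep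
      have := reroute hT (P := fun α => α ∉ ISet T (j+1)) hb w hw _ hxw
      rw [hgw] at this
      exact ih.trans (conv _ _ this)

end PreHG
namespace PreHG

variable {T : PreHG}

theorem not_target (hT : T.IsPFS) {j b : ℕ} (hb : b ∉ T.gamS j (T.faces (j+1)))
    (a : ℕ) : ¬ T.ltPlus j a b := by
  intro h
  rw [ltPlus, Relation.TransGen.tail'_iff] at h
  obtain ⟨c, _, ⟨w, hw, _, hgw⟩⟩ := h
  exact hb (mem_gamS.2 ⟨w, hw, hgw⟩)

theorem not_source (hT : T.IsPFS) {j a : ℕ} (ha : a ∉ T.delS j (T.faces (j+1)))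
    (b : ℕ) : ¬ T.ltPlus j a b := by
  intro h
  rw [ltPlus, Relation.TransGen.head'_iff] at h
  obtain ⟨c, ⟨w, hw, haw, _⟩, _⟩ := h
  exact ha (mem_delS.2 ⟨w, hw, haw⟩)

theorem dNonempty (hT : T.IsPFS) {k : ℕ} (hdim : T.dimIs (k+1)) :
    (T.faces k \ T.gamS k (T.faces (k+1))).Nonempty := by
  have hXne : (T.gamS k (T.faces (k+1))).Nonempty := by
    obtain ⟨α, hα⟩ := hdim.1
    exact ⟨T.gam k α, mem_gamS.2 ⟨α, hα, rfl⟩⟩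
  have hXsub : T.gamS k (T.faces (k+1)) ⊆ T.faces k := by
    intro x hx
    obtain ⟨α, hα, rfl⟩ := mem_gamS.1 hx
    exact hT.gamMem hα
  obtain ⟨m, hmX, hmin⟩ := exists_max_of_irrefl (T.gamS k (T.faces (k+1)))
    (fun a b => T.ltPlus k b a) (fun h1 h2 => h2.trans h1)
    (fun a ha => hT.strict k a (hXsub ha)) hXne
  obtain ⟨α, hα, hgα⟩ := mem_gamS.1 hmX
  obtain ⟨x, hx⟩ := hT.delNe hα
  refine ⟨x, Finset.mem_sdiff.2 ⟨hT.delSub hα hx, fun hxX => ?_⟩⟩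
  exact hmin x hxX (Relation.TransGen.single ⟨α, hα, hx, hgα⟩)

theorem cNonempty (hT : T.IsPFS) {k : ℕ} (hdim : T.dimIs (k+1)) :
    (T.faces k \ T.delS k (T.faces (k+1))).Nonempty := by
  have hXne : (T.gamS k (T.faces (k+1))).Nonempty := by
    obtain ⟨α, hα⟩ := hdim.1
    exact ⟨T.gam k α, mem_gamS.2 ⟨α, hα, rfl⟩⟩
  have hXsub : T.gamS k (T.faces (k+1)) ⊆ T.faces k := by
    intro x hx
    obtain ⟨α, hα, rfl⟩ := mem_gamS.1 hx
    exact hT.gamMem hα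
  obtain ⟨m, hmX, hmax⟩ := exists_max_of_irrefl (T.gamS k (T.faces (k+1)))
    (T.ltPlus k) (fun h1 h2 => h1.trans h2)
    (fun a ha => hT.strict k a (hXsub ha)) hXne
  refine ⟨m, Finset.mem_sdiff.2 ⟨hXsub hmX, fun hm => ?_⟩⟩
  obtain ⟨β, hβ, hmβ⟩ := mem_delS.1 hm
  exact hmax (T.gam k β) (mem_gamS.2 ⟨β, hβ, rfl⟩)
    (Relation.TransGen.single ⟨β, hβ, hmβ, rfl⟩)

theorem top1_d (hT : T.IsPFS) {k : ℕ} (hdim : T.dimIs (k+1)) :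
    (T.dTrunc k).IsPFS ∧ (T.dTrunc k).dimIs k := by
  constructor
  · refine ⟨⟨?_, ?_, ?_, ?_, ?_⟩, ?_, ?_, ?_, ?_, ?_, ?_⟩
    · -- gam closure
      intro j a ha
      rcases lt_trichotomy (j+1) k with h | h | h
      · rw [dT_faces_lt h] at ha
        rw [dT_faces_lt (by omega : j < k)]
        exact hT.gamMem ha
      · subst h
        rw [dT_faces_eq] at ha
        rw [dT_faces_lt (by omega : j < j + 1)]
        exact hT.gamMem (Finset.mem_sdiff.1 ha).1
      · rw [dT_faces_gt (by omega)] at ha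
        exact absurd ha (Finset.notMem_empty a)
    · -- del closure
      intro j a ha
      rcases lt_trichotomy (j+1) k with h | h | h
      · rw [dT_faces_lt h] at ha
        rw [dT_faces_lt (by omega : j < k)]
        exact hT.delSub ha
      · subst h
        rw [dT_faces_eq] at ha
        rw [dT_faces_lt (by omega : j < j + 1)]
        exact hT.delSub (Finset.mem_sdiff.1 ha).1
      · rw [dT_faces_gt (by omega)] at ha
        exact absurd ha (Finset.notMem_empty a)
    · -- del nonempty
      intro j a ha
      exact hT.delNe (dT_faces_sub ha)
    · -- card 1
      intro a ha
      exact hT.1.2.2.2.1 a (dT_faces_sub ha)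
    · -- bound
      exact ⟨k+1, fun l hl => dT_faces_gt (by omega)⟩
    · -- faces 0 nonempty
      by_cases hk : k = 0
      · subst hk
        rw [dT_faces_eq]
        exact dNonempty hT hdim
      · rw [dT_faces_lt (by omega)]
        exact hT.2.1
    · -- globular
      intro j a ha
      exact hT.glob j a (dT_faces_sub ha)
    · -- strict
      intro j a ha h
      exact hT.strict j a (dT_faces_sub ha) (dT_ltPlus_le h)
    · -- linear zero
      intro a ha b hb
      by_cases hk : k = 0
      · subst hk
        rw [dT_faces_eq] at ha hb
        rcases hT.linZero a (Finset.mem_sdiff.1 ha).1 b (Finset.mem_sdiff.1 hb).1 with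
          rfl | h | h
        · exact Or.inl rfl
        · exact absurd h (not_target hT (Finset.mem_sdiff.1 hb).2 a)
        · exact absurd h (not_target hT (Finset.mem_sdiff.1 ha).2 b)
      · rw [dT_faces_lt (by omega)] at ha hb
        rcases hT.linZero a ha b hb with rfl | h | h
        · exact Or.inl rfl
        · exact Or.inr (Or.inl (dT_transfer hT (by omega) h))
        · exact Or.inr (Or.inr (dT_transfer hT (by omega) h))
    · -- disjointness
      intro j a b ha hb hcontra
      refine hT.disj j a b (dT_faces_sub ha) (dT_faces_sub hb) ?_
      exact ⟨hcontra.1.imp dT_ltPlus_le dT_ltPlus_le,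
        hcontra.2.imp dT_ltMinus_le dT_ltMinus_le⟩
    · -- pencil
      intro j x
      constructor
      · intro a b ha hb hga hgb
        rcases lt_trichotomy (j+1) k with h | h | h
        · rw [dT_faces_lt h] at ha hb
          rcases (hT.pencil j x).1 a b ha hb hga hgb with rfl | hperp
          · exact Or.inl rfl
          · exact Or.inr (hperp.imp (dT_transfer hT (by omega))
              (dT_transfer hT (by omega)))
        · subst h
          rw [dT_faces_eq] at ha hb
          rcases (hT.pencil j x).1 a b (Finset.mem_sdiff.1 ha).1
            (Finset.mem_sdiff.1 hb).1 hga hgb with rfl | hperp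
          · exact Or.inl rfl
          · rcases hperp with h' | h'
            · exact absurd h' (not_target hT (Finset.mem_sdiff.1 hb).2 a)
            · exact absurd h' (not_target hT (Finset.mem_sdiff.1 ha).2 b)
        · rw [dT_faces_gt (by omega)] at ha
          exact absurd ha (Finset.notMem_empty a)
      · intro a b ha hb hga hgb
        rcases lt_trichotomy (j+1) k with h | h | h
        · rw [dT_faces_lt h] at ha hb
          rcases (hT.pencil j x).2 a b ha hb hga hgb with rfl | hperp
          · exact Or.inl rfl
          · exact Or.inr (hperp.imp (dT_transfer hT (by omega))
              (dT_transfer hT (by omega)))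
        · subst h
          rw [dT_faces_eq] at ha hb
          rcases (hT.pencil j x).2 a b (Finset.mem_sdiff.1 ha).1
            (Finset.mem_sdiff.1 hb).1 hga hgb with rfl | hperp
          · exact Or.inl rfl
          · rcases hperp with h' | h'
            · exact absurd h' (not_target hT (Finset.mem_sdiff.1 hb).2 a)
            · exact absurd h' (not_target hT (Finset.mem_sdiff.1 ha).2 b)
        · rw [dT_faces_gt (by omega)] at ha
          exact absurd ha (Finset.notMem_empty a)
  · exact ⟨by rw [dT_faces_eq]; exact dNonempty hT hdim,
      fun m hm => dT_faces_gt hm⟩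

end PreHG
namespace PreHG

variable {T : PreHG}

theorem cT_faces_pred' {k l : ℕ} (h : l + 1 = k) :
    (T.cTrunc k).faces l = T.faces l \ ISet T l := by
  rw [cT_faces_pred h, ISet, show k + 1 = l + 2 by omega]

theorem relC_to_cT (hT : T.IsPFS) {k j : ℕ} (hk : j + 1 = k) {a b : ℕ}
    (h : Relation.TransGen (relC T j) a b) : (T.cTrunc k).ltPlus j a b := by
  subst hk
  refine Relation.TransGen.mono ?_ _ _ h
  rintro x y ⟨α, hα, hext, hx, hg⟩
  exact ⟨α, by rw [cT_faces_eq]; exact Finset.mem_sdiff.2 ⟨hα, hext⟩, hx, hg⟩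

theorem facesNeDown {C : PreHG} (hg : ∀ j a, a ∈ C.faces (j+1) → C.gam j a ∈ C.faces j)
    {m : ℕ} (h : (C.faces m).Nonempty) : ∀ i, i ≤ m → (C.faces i).Nonempty := by
  have key : ∀ d i, i + d = m → (C.faces i).Nonempty := by
    intro d
    induction d with
    | zero => intro i hi; rw [show i = m by omega]; exact h
    | succ d ih =>
      intro i hi
      obtain ⟨x, hx⟩ := ih (i+1) (by omega)
      exact ⟨C.gam i x, hg i x hx⟩
  exact fun i hi => key (m - i) i (by omega)

theorem top1_c (hT : T.IsPFS) {k : ℕ} (hdim : T.dimIs (k+1)) :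
    (T.cTrunc k).IsPFS ∧ (T.cTrunc k).dimIs k := by
  have htop2 : T.faces (k+2) = ∅ := hdim.2 _ (by omega)
  -- gamma closure
  have hgamcl : ∀ j a, a ∈ (T.cTrunc k).faces (j+1) →
      (T.cTrunc k).gam j a ∈ (T.cTrunc k).faces j := by
    intro j a ha
    rcases lt_trichotomy (j+1) k with h | h | h
    · rcases Nat.lt_or_ge (j+2) k with h' | h'
      · rw [cT_faces_lt h'] at ha
        rw [cT_faces_lt (by omega : j + 1 < k)]
        exact hT.gamMem ha
      · have hpred : (j+1) + 1 = k := by omega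
        rw [cT_faces_pred' hpred] at ha
        rw [cT_faces_lt (by omega : j + 1 < k)]
        exact hT.gamMem (Finset.mem_sdiff.1 ha).1
    · -- top: external faces, use H1
      rw [h] at ha  -- careful
      rw [cT_faces_eq] at ha
      obtain ⟨ha1, ha2⟩ := Finset.mem_sdiff.1 ha
      rw [cT_faces_pred' h]
      have htop' : T.faces (j+3) = ∅ := hdim.2 _ (by omega)
      refine Finset.mem_sdiff.2 ⟨?_, ?_⟩
      · exact hT.gamMem (by rw [h]; exact ha1)
      · refine extNoIotaGam hT htop' (by rw [h]; exact ha1) ?_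
        rw [show j + 2 = k + 1 by omega, show j + 1 = k by omega]
        exact ha2
    · rw [cT_faces_gt (by omega)] at ha
      exact absurd ha (Finset.notMem_empty a)
  have hdelcl : ∀ j a, a ∈ (T.cTrunc k).faces (j+1) →
      (T.cTrunc k).del j a ⊆ (T.cTrunc k).faces j := by
    intro j a ha
    rcases lt_trichotomy (j+1) k with h | h | h
    · rcases Nat.lt_or_ge (j+2) k with h' | h'
      · rw [cT_faces_lt h'] at ha
        rw [cT_faces_lt (by omega : j + 1 < k)]
        exact hT.delSub ha
      · have hpred : (j+1) + 1 = k := by omega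
        rw [cT_faces_pred' hpred] at ha
        rw [cT_faces_lt (by omega : j + 1 < k)]
        exact hT.delSub (Finset.mem_sdiff.1 ha).1
    · rw [h, cT_faces_eq] at ha
      obtain ⟨ha1, ha2⟩ := Finset.mem_sdiff.1 ha
      rw [cT_faces_pred' h]
      intro x hx
      have ha1' : a ∈ T.faces (j+1) := by rw [h]; exact ha1
      have htop' : T.faces (j+3) = ∅ := hdim.2 _ (by omega)
      have hext : a ∉ T.delS (j+1) (T.faces (j+2)) := by
        rw [show j + 2 = k + 1 by omega, show j + 1 = k by omega]
        exact ha2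
      exact Finset.mem_sdiff.2 ⟨hT.delSub ha1' hx, extNoIotaDel hT htop' ha1' hext hx⟩
    · rw [cT_faces_gt (by omega)] at ha
      exact absurd ha (Finset.notMem_empty a)
  have hdimC : (T.cTrunc k).dimIs k :=
    ⟨by rw [cT_faces_eq]; exact cNonempty hT hdim, fun m hm => cT_faces_gt hm⟩
  constructor
  · refine ⟨⟨hgamcl, hdelcl, ?_, ?_, ?_⟩, ?_, ?_, ?_, ?_, ?_, ?_⟩
    · intro j a ha
      exact hT.delNe (cT_faces_sub ha)
    · intro a ha
      exact hT.1.2.2.2.1 a (cT_faces_sub ha)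
    · exact ⟨k+1, fun l hl => cT_faces_gt (by omega)⟩
    · -- faces 0 nonempty
      exact facesNeDown hgamcl hdimC.1 0 (by omega)
    · -- globular
      intro j a ha
      exact hT.glob j a (cT_faces_sub ha)
    · -- strict
      intro j a ha h
      exact hT.strict j a (cT_faces_sub ha) (cT_ltPlus_le h)
    · -- linear zero
      intro a ha b hb
      rcases lt_trichotomy 1 k with h | h | h
      · rw [cT_faces_lt (by omega : 0 + 1 < k)] at ha hb
        rcases hT.linZero a ha b hb with rfl | h' | h'
        · exact Or.inl rfl
        · exact Or.inr (Or.inl (cT_transfer hT (by omega) h'))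
        · exact Or.inr (Or.inr (cT_transfer hT (by omega) h'))
      · -- k = 1 : use mainC at level 0
        have hk1 : (0:ℕ) + 1 = k := by omega
        rw [cT_faces_pred' hk1] at ha hb
        obtain ⟨ha1, ha2⟩ := Finset.mem_sdiff.1 ha
        obtain ⟨hb1, hb2⟩ := Finset.mem_sdiff.1 hb
        have htop' : T.faces (0+3) = ∅ := hdim.2 _ (by omega)
        rcases hT.linZero a ha1 b hb1 with rfl | h' | h'
        · exact Or.inl rfl
        · exact Or.inr (Or.inl (relC_to_cT hT hk1 (mainC' hT htop' h' ha2 hb2)))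
        · exact Or.inr (Or.inr (relC_to_cT hT hk1 (mainC' hT htop' h' hb2 ha2)))
      · -- k = 0 : external vertices, equality forced
        have hk0 : k = 0 := by omega
        subst hk0
        rw [cT_faces_eq] at ha hb
        obtain ⟨ha1, ha2⟩ := Finset.mem_sdiff.1 ha
        obtain ⟨hb1, hb2⟩ := Finset.mem_sdiff.1 hb
        rcases hT.linZero a ha1 b hb1 with rfl | h' | h'
        · exact Or.inl rfl
        · exact absurd h' (not_source hT ha2 b)
        · exact absurd h' (not_source hT hb2 a)
    · -- disjointness
      intro j a b ha hb hcontra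
      refine hT.disj j a b (cT_faces_sub ha) (cT_faces_sub hb) ?_
      exact ⟨hcontra.1.imp cT_ltPlus_le cT_ltPlus_le,
        hcontra.2.imp cT_ltMinus_le cT_ltMinus_le⟩
    · -- pencil
      intro i x
      constructor
      · intro a b ha hb hga hgb
        rcases lt_trichotomy (i+1) k with h | h | h
        · rcases Nat.lt_or_ge (i+2) k with h' | h'
          · rw [cT_faces_lt h'] at ha hb
            rcases (hT.pencil i x).1 a b ha hb hga hgb with rfl | hperp
            · exact Or.inl rfl
            · exact Or.inr (hperp.imp (cT_transfer hT (by omega))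
                (cT_transfer hT (by omega)))
          · have hpred : (i+1) + 1 = k := by omega
            rw [cT_faces_pred' hpred] at ha hb
            obtain ⟨ha1, ha2⟩ := Finset.mem_sdiff.1 ha
            obtain ⟨hb1, hb2⟩ := Finset.mem_sdiff.1 hb
            have htop' : T.faces ((i+1)+3) = ∅ := hdim.2 _ (by omega)
            rcases (hT.pencil i x).1 a b ha1 hb1 hga hgb with rfl | hperp
            · exact Or.inl rfl
            · rcases hperp with h' | h'
              · exact Or.inr (Or.inl (relC_to_cT hT hpred (mainC' hT htop' h' ha2 hb2)))
              · exact Or.inr (Or.inr (relC_to_cT hT hpred (mainC' hT htop' h' hb2 ha2)))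
        · rw [h, cT_faces_eq] at ha hb
          obtain ⟨ha1, ha2⟩ := Finset.mem_sdiff.1 ha
          obtain ⟨hb1, hb2⟩ := Finset.mem_sdiff.1 hb
          have ha1' : a ∈ T.faces (i+1) := by rw [h]; exact ha1
          have hb1' : b ∈ T.faces (i+1) := by rw [h]; exact hb1
          have ha2' : a ∉ T.delS (i+1) (T.faces (i+2)) := by
            rw [show i + 2 = k + 1 by omega, show i + 1 = k by omega]; exact ha2
          have hb2' : b ∉ T.delS (i+1) (T.faces (i+2)) := by
            rw [show i + 2 = k + 1 by omega, show i + 1 = k by omega]; exact hb2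
          rcases (hT.pencil i x).1 a b ha1' hb1' hga hgb with rfl | hperp
          · exact Or.inl rfl
          · rcases hperp with h' | h'
            · exact absurd h' (not_source hT ha2' b)
            · exact absurd h' (not_source hT hb2' a)
        · rw [cT_faces_gt (by omega)] at ha
          exact absurd ha (Finset.notMem_empty a)
      · intro a b ha hb hga hgb
        rcases lt_trichotomy (i+1) k with h | h | h
        · rcases Nat.lt_or_ge (i+2) k with h' | h'
          · rw [cT_faces_lt h'] at ha hb
            rcases (hT.pencil i x).2 a b ha hb hga hgb with rfl | hperp
            · exact Or.inl rfl
            · exact Or.inr (hperp.imp (cT_transfer hT (by omega))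
                (cT_transfer hT (by omega)))
          · have hpred : (i+1) + 1 = k := by omega
            rw [cT_faces_pred' hpred] at ha hb
            obtain ⟨ha1, ha2⟩ := Finset.mem_sdiff.1 ha
            obtain ⟨hb1, hb2⟩ := Finset.mem_sdiff.1 hb
            have htop' : T.faces ((i+1)+3) = ∅ := hdim.2 _ (by omega)
            rcases (hT.pencil i x).2 a b ha1 hb1 hga hgb with rfl | hperp
            · exact Or.inl rfl
            · rcases hperp with h' | h'
              · exact Or.inr (Or.inl (relC_to_cT hT hpred (mainC' hT htop' h' ha2 hb2)))
              · exact Or.inr (Or.inr (relC_to_cT hT hpred (mainC' hT htop' h' hb2 ha2)))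
        · rw [h, cT_faces_eq] at ha hb
          obtain ⟨ha1, ha2⟩ := Finset.mem_sdiff.1 ha
          obtain ⟨hb1, hb2⟩ := Finset.mem_sdiff.1 hb
          have ha1' : a ∈ T.faces (i+1) := by rw [h]; exact ha1
          have hb1' : b ∈ T.faces (i+1) := by rw [h]; exact hb1
          have ha2' : a ∉ T.delS (i+1) (T.faces (i+2)) := by
            rw [show i + 2 = k + 1 by omega, show i + 1 = k by omega]; exact ha2
          have hb2' : b ∉ T.delS (i+1) (T.faces (i+2)) := by
            rw [show i + 2 = k + 1 by omega, show i + 1 = k by omega]; exact hb2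
          rcases (hT.pencil i x).2 a b ha1' hb1' hga hgb with rfl | hperp
          · exact Or.inl rfl
          · rcases hperp with h' | h'
            · exact absurd h' (not_source hT ha2' b)
            · exact absurd h' (not_source hT hb2' a)
        · rw [cT_faces_gt (by omega)] at ha
          exact absurd ha (Finset.notMem_empty a)
  · exact hdimC

end PreHG
namespace PreHG

variable {S : PreHG}

theorem ext' {A B : PreHG} (hf : ∀ l, A.faces l = B.faces l)
    (hg : A.gam = B.gam) (hd : A.del = B.del) : A = B := by
  cases A; cases B
  simp only [mk.injEq]
  exact ⟨funext hf, hg, hd⟩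

theorem dT_gamS {m k : ℕ} {A : Finset ℕ} : (S.dTrunc m).gamS k A = S.gamS k A := rfl
theorem dT_delS {m k : ℕ} {A : Finset ℕ} : (S.dTrunc m).delS k A = S.delS k A := rfl
theorem cT_gamS {m k : ℕ} {A : Finset ℕ} : (S.cTrunc m).gamS k A = S.gamS k A := rfl
theorem cT_delS {m k : ℕ} {A : Finset ℕ} : (S.cTrunc m).delS k A = S.delS k A := rfl
theorem cT_iota {m k a : ℕ} : (S.cTrunc m).iota k a = S.iota k a := rfl

theorem dTrunc_top {n : ℕ} (hdim : S.dimIs n) : S.dTrunc n = S := by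
  refine ext' (fun l => ?_) rfl rfl
  rcases lt_trichotomy l n with h | rfl | h
  · exact dT_faces_lt h
  · rw [dT_faces_eq, hdim.2 (l+1) (by omega)]
    simp [gamS]
  · rw [dT_faces_gt h, hdim.2 l h]

theorem cTrunc_top {n : ℕ} (hdim : S.dimIs n) : S.cTrunc n = S := by
  refine ext' (fun l => ?_) rfl rfl
  rcases lt_trichotomy l n with h | rfl | h
  · rcases Nat.lt_or_ge (l+1) n with h' | h'
    · exact cT_faces_lt h'
    · have hp : l + 1 = n := by omega
      rw [cT_faces_pred hp, hdim.2 (n+1) (by omega)]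
      simp
  · rw [cT_faces_eq, hdim.2 (l+1) (by omega)]
    simp [delS]
  · rw [cT_faces_gt h, hdim.2 l h]

/-- every codomain of a (k+1)-face is the codomain of a non-codomain (k+1)-face -/
theorem gam_descend (hS : S.IsPFS) {k : ℕ} :
    ∀ B ∈ S.faces (k+1), ∃ B', B' ∈ S.faces (k+1) ∧
      B' ∉ S.gamS (k+1) (S.faces (k+2)) ∧ S.gam k B' = S.gam k B := by
  have key : ∀ N B, S.mDown (k+1) B ≤ N → B ∈ S.faces (k+1) →
      ∃ B', B' ∈ S.faces (k+1) ∧ B' ∉ S.gamS (k+1) (S.faces (k+2)) ∧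
        S.gam k B' = S.gam k B := by
    intro N
    induction N using Nat.strong_induction_on with
    | _ N ih =>
    intro B hBN hB
    by_cases hBg : B ∈ S.gamS (k+1) (S.faces (k+2))
    · obtain ⟨Ω, hΩ, hgΩ⟩ := mem_gamS.1 hBg
      have hgg := (glob_gg hS hΩ).1
      rw [hgΩ] at hgg
      obtain ⟨B'', hB''Ω, hgB''⟩ := mem_gamS.1 hgg
      have hop : S.ltPlusOne (k+1) B'' B := ⟨Ω, hΩ, hB''Ω, hgΩ⟩
      obtain ⟨B', h1, h2, h3⟩ := ih (S.mDown (k+1) B'')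
        (lt_of_lt_of_le (mDown_lt hS hop) hBN) B'' le_rfl (hS.delSub hΩ hB''Ω)
      exact ⟨B', h1, h2, by rw [h3, hgB'']⟩
    · exact ⟨B, hB, hBg, rfl⟩
  exact fun B hB => key (S.mDown (k+1) B) B le_rfl hB

theorem dTrunc_comp (hS : S.IsPFS) {k : ℕ} :
    S.dTrunc k = (S.dTrunc (k+1)).dTrunc k := by
  refine ext' (fun l => ?_) rfl rfl
  rcases lt_trichotomy l k with h | rfl | h
  · rw [dT_faces_lt h, dT_faces_lt h, dT_faces_lt (by omega : l < k + 1)]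
  · rw [dT_faces_eq, dT_faces_eq, dT_gamS, dT_faces_lt (by omega : l < l + 1),
      dT_faces_eq]
    apply Finset.ext
    intro x
    simp only [Finset.mem_sdiff]
    constructor
    · rintro ⟨hx1, hx2⟩
      refine ⟨hx1, fun hx3 => hx2 ?_⟩
      obtain ⟨B, hB, hgB⟩ := mem_gamS.1 hx3
      exact mem_gamS.2 ⟨B, (Finset.mem_sdiff.1 hB).1, hgB⟩
    · rintro ⟨hx1, hx2⟩
      refine ⟨hx1, fun hx3 => hx2 ?_⟩
      obtain ⟨B, hB, hgB⟩ := mem_gamS.1 hx3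
      obtain ⟨B', h1, h2, h3⟩ := gam_descend hS B hB
      exact mem_gamS.2 ⟨B', Finset.mem_sdiff.2 ⟨h1, h2⟩, by rw [h3, hgB]⟩
  · rw [dT_faces_gt h, dT_faces_gt h]

/-- δ-elements are δ-elements of external faces, or internal -/
theorem del_ascend (hS : S.IsPFS) {k x : ℕ} :
    ∀ B ∈ S.faces (k+1), x ∈ S.del k B → x ∈ ISet S k ∨
      ∃ B', B' ∈ S.faces (k+1) ∧ B' ∉ S.delS (k+1) (S.faces (k+2)) ∧
        x ∈ S.del k B' := by
  have key : ∀ N B, S.mUp (k+1) B ≤ N → B ∈ S.faces (k+1) → x ∈ S.del k B →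
      x ∈ ISet S k ∨ ∃ B', B' ∈ S.faces (k+1) ∧
        B' ∉ S.delS (k+1) (S.faces (k+2)) ∧ x ∈ S.del k B' := by
    intro N
    induction N using Nat.strong_induction_on with
    | _ N ih =>
    intro B hBN hB hx
    by_cases hBd : B ∈ S.delS (k+1) (S.faces (k+2))
    · obtain ⟨Ω, hΩ, hBΩ⟩ := mem_delS.1 hBd
      have hxδδ : x ∈ S.delS k (S.del (k+1) Ω) := mem_delS.2 ⟨B, hBΩ, hx⟩
      by_cases hxg : x ∈ S.gamS k (S.del (k+1) Ω)
      · exact Or.inl (mem_ISet.2 ⟨Ω, hΩ, hxδδ, hxg⟩)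
      · have hxnext : x ∈ S.del k (S.gam (k+1) Ω) := by
          rw [glob_del hS hΩ, Finset.mem_sdiff]; exact ⟨hxδδ, hxg⟩
        have hop : S.ltPlusOne (k+1) B (S.gam (k+1) Ω) := ⟨Ω, hΩ, hBΩ, rfl⟩
        exact ih (S.mUp (k+1) (S.gam (k+1) Ω))
          (lt_of_lt_of_le (mUp_lt hS hop) hBN) _ le_rfl (hS.gamMem hΩ) hxnext
    · exact Or.inr ⟨B, hB, hBd, hx⟩
  exact fun B hB hx => key (S.mUp (k+1) B) B le_rfl hB hx

/-- internal faces for an internal (k+2)-face are internal for some external one -/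
theorem iota_ascend (hS : S.IsPFS) {l : ℕ} :
    ∀ A ∈ S.faces (l+2), ∀ x ∈ S.iota l A,
      ∃ A', A' ∈ S.faces (l+2) ∧ A' ∉ S.delS (l+2) (S.faces (l+3)) ∧
        x ∈ S.iota l A' := by
  have key : ∀ N A, S.mUp (l+2) A ≤ N → A ∈ S.faces (l+2) → ∀ x ∈ S.iota l A,
      ∃ A', A' ∈ S.faces (l+2) ∧ A' ∉ S.delS (l+2) (S.faces (l+3)) ∧
        x ∈ S.iota l A' := by
    intro N
    induction N using Nat.strong_induction_on with
    | _ N ih =>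
    intro A hAN hA x hx
    by_cases hAd : A ∈ S.delS (l+2) (S.faces (l+3))
    · obtain ⟨Ω, hΩ, hAΩ⟩ := mem_delS.1 hAd
      obtain ⟨hxδ, hxγ⟩ := Finset.mem_inter.1 hx
      -- descend a witness for the γ-part
      have cdesc : ∀ M c, S.mDown (l+1) c ≤ M → c ∈ S.delS (l+1) (S.del (l+2) Ω) →
          S.gam l c = x → ∃ c', c' ∈ S.del (l+1) (S.gam (l+2) Ω) ∧ S.gam l c' = x := by
        intro M
        induction M using Nat.strong_induction_on with
        | _ M ihM =>
        intro c hcM hc hgc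
        by_cases hcg : c ∈ S.gamS (l+1) (S.del (l+2) Ω)
        · obtain ⟨V, hVΩ, hgV⟩ := mem_gamS.1 hcg
          have hVf : V ∈ S.faces (l+2) := hS.delSub hΩ hVΩ
          have hgg := (glob_gg hS hVf).1
          rw [hgV, hgc] at hgg
          obtain ⟨t, htV, hgt⟩ := mem_gamS.1 hgg
          have htδδ : t ∈ S.delS (l+1) (S.del (l+2) Ω) := mem_delS.2 ⟨V, hVΩ, htV⟩
          have hop : S.ltPlusOne (l+1) t c := ⟨V, hVf, htV, hgV⟩
          exact ihM (S.mDown (l+1) t) (lt_of_lt_of_le (mDown_lt hS hop) hcM)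
            t le_rfl htδδ hgt
        · refine ⟨c, ?_, hgc⟩
          rw [glob_del hS hΩ, Finset.mem_sdiff]
          exact ⟨hc, hcg⟩
      have ddesc : ∀ M d, S.mDown (l+1) d ≤ M → d ∈ S.delS (l+1) (S.del (l+2) Ω) →
          x ∈ S.del l d → ∃ d', d' ∈ S.del (l+1) (S.gam (l+2) Ω) ∧ x ∈ S.del l d' := by
        intro M
        induction M using Nat.strong_induction_on with
        | _ M ihM =>
        intro d hdM hd hxd
        by_cases hdg : d ∈ S.gamS (l+1) (S.del (l+2) Ω)
        · obtain ⟨U, hUΩ, hgU⟩ := mem_gamS.1 hdg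
          have hUf : U ∈ S.faces (l+2) := hS.delSub hΩ hUΩ
          have hxd' : x ∈ S.del l (S.gam (l+1) U) := by rw [hgU]; exact hxd
          rw [glob_del hS hUf, Finset.mem_sdiff] at hxd'
          obtain ⟨e, heU, hxe⟩ := mem_delS.1 hxd'.1
          have heδδ : e ∈ S.delS (l+1) (S.del (l+2) Ω) := mem_delS.2 ⟨U, hUΩ, heU⟩
          have hop : S.ltPlusOne (l+1) e d := ⟨U, hUf, heU, hgU⟩
          exact ihM (S.mDown (l+1) e) (lt_of_lt_of_le (mDown_lt hS hop) hdM)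
            e le_rfl heδδ hxe
        · refine ⟨d, ?_, hxd⟩
          rw [glob_del hS hΩ, Finset.mem_sdiff]
          exact ⟨hd, hdg⟩
      obtain ⟨β₂, hβ₂A, hgβ₂⟩ := mem_gamS.1 hxγ
      obtain ⟨β₁, hβ₁A, hxβ₁⟩ := mem_delS.1 hxδ
      obtain ⟨c', hc'1, hc'2⟩ := cdesc (S.mDown (l+1) β₂) β₂ le_rfl
        (mem_delS.2 ⟨A, hAΩ, hβ₂A⟩) hgβ₂
      obtain ⟨d', hd'1, hd'2⟩ := ddesc (S.mDown (l+1) β₁) β₁ le_rfl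
        (mem_delS.2 ⟨A, hAΩ, hβ₁A⟩) hxβ₁
      have hnext : x ∈ S.iota l (S.gam (l+2) Ω) := by
        refine Finset.mem_inter.2 ⟨mem_delS.2 ⟨d', hd'1, hd'2⟩,
          mem_gamS.2 ⟨c', hc'1, hc'2⟩⟩
      have hop : S.ltPlusOne (l+2) A (S.gam (l+2) Ω) := ⟨Ω, hΩ, hAΩ, rfl⟩
      exact ih (S.mUp (l+2) (S.gam (l+2) Ω)) (lt_of_lt_of_le (mUp_lt hS hop) hAN)
        _ le_rfl (hS.gamMem hΩ) x hnext
    · exact ⟨A, hA, hAd, hx⟩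
  exact fun A hA x hx => key (S.mUp (l+2) A) A le_rfl hA x hx

theorem cTrunc_comp (hS : S.IsPFS) {k : ℕ} :
    S.cTrunc k = (S.cTrunc (k+1)).cTrunc k := by
  refine ext' (fun l => ?_) rfl rfl
  rcases lt_trichotomy l k with h | rfl | h
  · rcases Nat.lt_or_ge (l+1) k with h' | h'
    · rw [cT_faces_lt h', cT_faces_lt h', cT_faces_lt (by omega : l + 1 < k + 1)]
    · have hp : l + 1 = k := by omega
      rw [cT_faces_pred' hp, cT_faces_pred' (T := S.cTrunc (k+1)) hp,
        cT_faces_lt (by omega : l + 1 < k + 1)]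
      have hIS : ISet (S.cTrunc (k+1)) l =
          ((S.cTrunc (k+1)).faces (l+2)).biUnion (S.iota l) := rfl
      rw [hIS, show l + 2 = k + 1 by omega, cT_faces_eq]
      apply Finset.ext
      intro x
      simp only [Finset.mem_sdiff]
      constructor
      · rintro ⟨hx1, hx2⟩
        refine ⟨hx1, fun hx3 => hx2 ?_⟩
        obtain ⟨A, hA, hxA⟩ := Finset.mem_biUnion.1 hx3
        have hA' : A ∈ S.faces (l+2) := by
          have := (Finset.mem_sdiff.1 hA).1
          rw [show l + 2 = k + 1 by omega]
          exact this
        exact Finset.mem_biUnion.2 ⟨A, hA', hxA⟩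
      · rintro ⟨hx1, hx2⟩
        refine ⟨hx1, fun hx3 => hx2 ?_⟩
        obtain ⟨A, hA, hxA⟩ := Finset.mem_biUnion.1 hx3
        have hA' : A ∈ S.faces (l+2) := by
          rw [show l + 2 = k + 1 by omega] at hA ⊢
          exact hA
        obtain ⟨A', h1, h2, h3⟩ := iota_ascend hS A hA' x hxA
        refine Finset.mem_biUnion.2 ⟨A', Finset.mem_sdiff.2 ⟨?_, ?_⟩, h3⟩
        · rw [show (l:ℕ) + 2 = k + 1 by omega] at h1; exact h1
        · rw [show (l:ℕ) + 2 = k + 1 by omega, show (l:ℕ) + 3 = k + 2 by omega] at h2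
          exact h2
  · rw [cT_faces_eq, cT_faces_eq, cT_delS, cT_faces_pred' (by omega : l + 1 = l + 1),
      cT_faces_eq]
    apply Finset.ext
    intro x
    simp only [Finset.mem_sdiff]
    constructor
    · rintro ⟨hx1, hx2⟩
      refine ⟨⟨hx1, fun hxI => hx2 ?_⟩, fun hx3 => hx2 ?_⟩
      · obtain ⟨Ω, hΩ, hxΩ⟩ := Finset.mem_biUnion.1 hxI
        obtain ⟨hxδ, _⟩ := Finset.mem_inter.1 hxΩ
        obtain ⟨c, hcΩ, hxc⟩ := mem_delS.1 hxδ
        exact mem_delS.2 ⟨c, hS.delSub hΩ hcΩ, hxc⟩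
      · obtain ⟨B, hB, hxB⟩ := mem_delS.1 hx3
        exact mem_delS.2 ⟨B, (Finset.mem_sdiff.1 hB).1, hxB⟩
    · rintro ⟨⟨hx1, hxI⟩, hx3⟩
      refine ⟨hx1, fun hx2 => ?_⟩
      obtain ⟨B, hB, hxB⟩ := mem_delS.1 hx2
      rcases del_ascend hS B hB hxB with h' | ⟨B', h1, h2, h3⟩
      · exact hxI h'
      · exact hx3 (mem_delS.2 ⟨B', Finset.mem_sdiff.2 ⟨h1, h2⟩, h3⟩)
  · rw [cT_faces_gt h, cT_faces_gt h]

end PreHG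

/-- If `S` is a positive face structure of dimension `n ≥ k`, then
`d^{(k)}S` and `c^{(k)}S` are positive face structures of dimension `k`. -/
theorem stmt19 (S : PreHG) (hS : S.IsPFS) (n k : ℕ)
    (hdim : S.dimIs n) (hk : k ≤ n) :
    (S.dTrunc k).IsPFS ∧ (S.dTrunc k).dimIs k ∧
    (S.cTrunc k).IsPFS ∧ (S.cTrunc k).dimIs k := by
  have main : ∀ d k', k' + d = n →
      (S.dTrunc k').IsPFS ∧ (S.dTrunc k').dimIs k' ∧
      (S.cTrunc k').IsPFS ∧ (S.cTrunc k').dimIs k' := by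
    intro d
    induction d with
    | zero =>
      intro k' hk'
      have : k' = n := by omega
      subst this
      rw [PreHG.dTrunc_top hdim, PreHG.cTrunc_top hdim]
      exact ⟨hS, hdim, hS, hdim⟩
    | succ d ih =>
      intro k' hk'
      obtain ⟨hdP, hdD, hcP, hcD⟩ := ih (k'+1) (by omega)
      have h1 := PreHG.top1_d hdP hdD
      have h2 := PreHG.top1_c hcP hcD
      rw [← PreHG.dTrunc_comp hS] at h1
      rw [← PreHG.cTrunc_comp hS] at h2
      exact ⟨h1.1, h1.2, h2.1, h2.2.1, h2.2.2⟩
  obtain ⟨a1, a2, a3, a4⟩ := main (n - k) k (by omega)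
  exact ⟨a1, a2, a3, a4⟩
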